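/- arXiv:1805.02015 — 5 statements merged into one kernel-verified Lean document; each statement's English description precedes it below -/
import Mathlib

section
/- Let N be a normal subgroup of a finite group G such that G/N is isomorphic to the Klein four group C₂ × C₂. Then for any G-stable linear character τ of N (meaning τ(gng⁻¹) = τ(n) for all g ∈ G, n ∈ N), the square τ² extends to a linear character of G. -/
section Aux

variable {G : Type*} [Group G] (N : Subgroup G) (τ : N →* ℂˣ)

open Classical in
/-- The character `τ` extended to all of `G` by `1` outside `N`. -/
noncomputable def auxf : G → ℂˣ := fun g =>
  if h : g ∈ N then τ ⟨g, h⟩ else 1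

variable {N τ}

lemma auxf_mem {n : G} (hn : n ∈ N) : auxf N τ n = τ ⟨n, hn⟩ := dif_pos hn

lemma auxf_one : auxf N τ 1 = 1 := by
  rw [auxf_mem (one_mem N)]
  exact map_one τ

lemma auxf_mul {a b : G} (ha : a ∈ N) (hb : b ∈ N) :
    auxf N τ (a * b) = auxf N τ a * auxf N τ b := by
  rw [auxf_mem (mul_mem ha hb), auxf_mem ha, auxf_mem hb, ← map_mul]
  rfl

lemma auxf_inv {a : G} (ha : a ∈ N) : auxf N τ a⁻¹ = (auxf N τ a)⁻¹ := by
  rw [auxf_mem (inv_mem ha), auxf_mem ha, ← map_inv]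
  rfl

variable [hN : N.Normal]

lemma auxf_conj
    (hτ : ∀ (g n : G) (hn : n ∈ N), τ ⟨g * n * g⁻¹, hN.conj_mem n hn g⟩ = τ ⟨n, hn⟩)
    (g : G) {n : G} (hn : n ∈ N) :
    auxf N τ (g * n * g⁻¹) = auxf N τ n := by
  rw [auxf_mem (hN.conj_mem n hn g), auxf_mem hn]
  exact hτ g n hn

lemma auxf_conj'
    (hτ : ∀ (g n : G) (hn : n ∈ N), τ ⟨g * n * g⁻¹, hN.conj_mem n hn g⟩ = τ ⟨n, hn⟩)
    (g : G) {n : G} (hn : n ∈ N) :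
    auxf N τ (g⁻¹ * n * g) = auxf N τ n := by
  have := auxf_conj hτ g⁻¹ hn
  rwa [inv_inv] at this

/-- Decomposition of `f ((pq)²)`. -/
lemma auxf_sq_mul
    (hτ : ∀ (g n : G) (hn : n ∈ N), τ ⟨g * n * g⁻¹, hN.conj_mem n hn g⟩ = τ ⟨n, hn⟩)
    (hsq : ∀ g : G, g * g ∈ N) (hcm : ∀ g h : G, g * h * g⁻¹ * h⁻¹ ∈ N) (p q : G) :
    auxf N τ ((p * q) * (p * q)) =
      auxf N τ (p * q * p⁻¹ * q⁻¹) * (auxf N τ (p * p) * auxf N τ (q * q)) := by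
  have hid : (p * q) * (p * q) = (p * q * p⁻¹ * q⁻¹) * ((q * (p * p) * q⁻¹) * (q * q)) := by
    group
  rw [hid, auxf_mul (hcm p q) (mul_mem (hN.conj_mem _ (hsq p) q) (hsq q)),
    auxf_mul (hN.conj_mem _ (hsq p) q) (hsq q), auxf_conj hτ q (hsq p)]

/-- The square of the value of `τ` on any commutator is `1`. -/
lemma auxf_sq_comm
    (hτ : ∀ (g n : G) (hn : n ∈ N), τ ⟨g * n * g⁻¹, hN.conj_mem n hn g⟩ = τ ⟨n, hn⟩)
    (hsq : ∀ g : G, g * g ∈ N) (hcm : ∀ g h : G, g * h * g⁻¹ * h⁻¹ ∈ N) (g h : G) :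
    auxf N τ (g * h * g⁻¹ * h⁻¹) ^ 2 = 1 := by
  have e1 := auxf_sq_mul hτ hsq hcm g h
  have e2 := auxf_sq_mul hτ hsq hcm h g
  have e3 : auxf N τ ((h * g) * (h * g)) = auxf N τ ((g * h) * (g * h)) := by
    have hid : (h * g) * (h * g) = h * ((g * h) * (g * h)) * h⁻¹ := by group
    rw [hid, auxf_conj hτ h (hsq (g * h))]
  have e4 : auxf N τ (h * g * h⁻¹ * g⁻¹) = (auxf N τ (g * h * g⁻¹ * h⁻¹))⁻¹ := by
    have hid : h * g * h⁻¹ * g⁻¹ = (g * h * g⁻¹ * h⁻¹)⁻¹ := by group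
    rw [hid, auxf_inv (hcm g h)]
  rw [e3, e1, e4] at e2
  rw [mul_comm (auxf N τ (h * h)) (auxf N τ (g * g))] at e2
  have key : auxf N τ (g * h * g⁻¹ * h⁻¹) = (auxf N τ (g * h * g⁻¹ * h⁻¹))⁻¹ :=
    mul_right_cancel e2
  rw [sq]
  exact mul_eq_one_iff_eq_inv.mpr key

end Aux

/-- If `G/N` is a Klein four group and `τ` is a `G`-stable linear character of `N`,
then `τ²` extends to a linear character of `G`. -/
theorem stmt_1 {G : Type*} [Group G] [Finite G] (N : Subgroup G) [hN : N.Normal]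
    [IsKleinFour (G ⧸ N)]
    (τ : N →* ℂˣ)
    (hτ : ∀ (g n : G) (hn : n ∈ N), τ ⟨g * n * g⁻¹, hN.conj_mem n hn g⟩ = τ ⟨n, hn⟩) :
    ∃ lam : G →* ℂˣ, ∀ (n : G) (hn : n ∈ N), lam n = (τ ⟨n, hn⟩) ^ 2 := by
  classical
  -- Basic facts about the Klein four quotient
  have hQsq : ∀ u : G ⧸ N, u * u = 1 := fun u => IsKleinFour.mul_self u
  have hQcomm : ∀ u v : G ⧸ N, u * v = v * u :=
    mul_comm_of_exponent_two IsKleinFour.exponent_two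
  have hsq : ∀ g : G, g * g ∈ N := by
    intro g
    rw [← QuotientGroup.eq_one_iff, QuotientGroup.mk_mul]
    exact hQsq _
  have hcm : ∀ g h : G, g * h * g⁻¹ * h⁻¹ ∈ N := by
    intro g h
    rw [← QuotientGroup.eq_one_iff]
    simp only [QuotientGroup.mk_mul, QuotientGroup.mk_inv]
    rw [hQcomm (g : G ⧸ N) (h : G ⧸ N)]
    group
  set f : G → ℂˣ := auxf N τ with hfdef
  have fmem : ∀ {n : G} (hn : n ∈ N), f n = τ ⟨n, hn⟩ := fun hn => auxf_mem hn
  have fone : f 1 = 1 := auxf_one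
  have fmul : ∀ {a b : G}, a ∈ N → b ∈ N → f (a * b) = f a * f b :=
    fun ha hb => auxf_mul ha hb
  have fconj' : ∀ (g : G) {n : G}, n ∈ N → f (g⁻¹ * n * g) = f n :=
    fun g _ hn => auxf_conj' hτ g hn
  have fsqmul : ∀ p q : G, f ((p * q) * (p * q)) =
      f (p * q * p⁻¹ * q⁻¹) * (f (p * p) * f (q * q)) :=
    fun p q => auxf_sq_mul hτ hsq hcm p q
  have fsqcomm : ∀ g h : G, f (g * h * g⁻¹ * h⁻¹) ^ 2 = 1 :=
    fun g h => auxf_sq_comm hτ hsq hcm g h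
  -- choose generators of the quotient
  have hnt : Nontrivial (G ⧸ N) := by
    have h4 := IsKleinFour.card_four (G := G ⧸ N)
    have : 1 < Nat.card (G ⧸ N) := by omega
    exact (Finite.one_lt_card_iff_nontrivial).mp this
  obtain ⟨x, hx1⟩ := exists_ne (1 : G ⧸ N)
  obtain ⟨y, hy1, hyx⟩ : ∃ y : G ⧸ N, y ≠ 1 ∧ y ≠ x := by
    by_contra hcon
    push_neg at hcon
    have hft := Fintype.ofFinite (G ⧸ N)
    have hsub : (Finset.univ : Finset (G ⧸ N)) ⊆ {1, x} := by
      intro z _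
      rcases eq_or_ne z 1 with h | h
      · simp [h]
      · simp [hcon z h]
    have hc := Finset.card_le_card hsub
    have h2 : ({1, x} : Finset (G ⧸ N)).card ≤ 2 := Finset.card_insert_le _ _
    rw [Finset.card_univ, IsKleinFour.card_four'] at hc
    omega
  -- distinctness facts
  have hxy1 : x * y ≠ 1 := by
    intro h
    apply hyx
    have : y = x⁻¹ := eq_inv_of_mul_eq_one_left (by rw [hQcomm] at h; exact h)
    rw [this, IsKleinFour.inv_eq_self]
  have hxyx : x * y ≠ x := fun h => hy1 (by rwa [mul_eq_left] at h)
  have hxyy : x * y ≠ y := fun h => hx1 (by rwa [mul_eq_right] at h)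
  -- classification of elements of the quotient
  have hclass : ∀ q : G ⧸ N, q = 1 ∨ q = x ∨ q = y ∨ q = x * y := by
    intro q
    by_cases h1 : q = 1
    · exact Or.inl h1
    by_cases h2 : q = x
    · exact Or.inr (Or.inl h2)
    by_cases h3 : q = y
    · exact Or.inr (Or.inr (Or.inl h3))
    exact Or.inr (Or.inr (Or.inr
      (IsKleinFour.eq_mul_of_ne_all hx1 hy1 (Ne.symm hyx) h1 h2 h3)))
  -- lifts
  obtain ⟨a, ha⟩ := QuotientGroup.mk_surjective x
  obtain ⟨b, hb⟩ := QuotientGroup.mk_surjective y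
  have hab : ((a * b : G) : G ⧸ N) = x * y := by rw [QuotientGroup.mk_mul, ha, hb]
  set A : ℂˣ := f (a * a) with hA
  set B : ℂˣ := f (b * b) with hB
  -- representatives and correction factors
  set rep : G ⧸ N → G := fun q => if q = 1 then 1 else if q = x then a else
    if q = y then b else a * b with hrepdef
  set kk : G ⧸ N → ℂˣ := fun q => if q = 1 then 1 else if q = x then A else
    if q = y then B else A * B with hkkdef
  have rep1 : rep 1 = 1 := by simp [hrepdef]
  have repx : rep x = a := by simp [hrepdef, hx1]
  have repy : rep y = b := by simp [hrepdef, hy1, hyx]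
  have repxy : rep (x * y) = a * b := by simp [hrepdef, hxy1, hxyx, hxyy]
  have kk1 : kk 1 = 1 := by simp [hkkdef]
  have kkx : kk x = A := by simp [hkkdef, hx1]
  have kky : kk y = B := by simp [hkkdef, hy1, hyx]
  have kkxy : kk (x * y) = A * B := by simp [hkkdef, hxy1, hxyx, hxyy]
  have hrep : ∀ q : G ⧸ N, ((rep q : G) : G ⧸ N) = q := by
    intro q
    rcases hclass q with h | h | h | h <;> subst h
    · rw [rep1]; rfl
    · rw [repx]; exact ha
    · rw [repy]; exact hb
    · rw [repxy]; exact hab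
  have memng : ∀ g : G, (rep ((g : G ⧸ N)))⁻¹ * g ∈ N := by
    intro g
    rw [← QuotientGroup.eq_one_iff]
    simp only [QuotientGroup.mk_mul, QuotientGroup.mk_inv]
    rw [hrep]
    group
  have memom : ∀ u v : G ⧸ N, (rep (u * v))⁻¹ * (rep u * rep v) ∈ N := by
    intro u v
    rw [← QuotientGroup.eq_one_iff]
    simp only [QuotientGroup.mk_mul, QuotientGroup.mk_inv]
    rw [hrep, hrep, hrep]
    group
  -- the cocycle condition
  have hcoc : ∀ u v : G ⧸ N,
      kk (u * v) * f ((rep (u * v))⁻¹ * (rep u * rep v)) ^ 2 = kk u * kk v := by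
    intro u v
    rcases hclass u with hu | hu | hu | hu <;> rcases hclass v with hv | hv | hv | hv <;>
      rw [hu, hv]
    · simp [rep1, kk1, fone, mul_assoc]
    · simp [rep1, repx, kk1, kkx, fone, mul_assoc]
    · simp [rep1, repy, kk1, kky, fone, mul_assoc]
    · simp [rep1, repxy, kk1, kkxy, fone, mul_assoc]
    · simp [rep1, repx, kk1, kkx, fone, mul_assoc]
    · -- (x, x)
      rw [hQsq x, rep1, repx, kk1, kkx]
      have : (1 : G)⁻¹ * (a * a) = a * a := by group
      rw [this, one_mul, ← hA, sq]
    · -- (x, y)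
      rw [repxy, repx, repy, kkxy, kkx, kky]
      have : ((a * b : G))⁻¹ * (a * b) = 1 := by group
      rw [this, fone, one_pow, mul_one]
    · -- (x, x*y)
      have huv : x * (x * y) = y := by rw [← mul_assoc, hQsq x, one_mul]
      rw [huv, repy, repx, repxy, kky, kkx, kkxy]
      have hid : b⁻¹ * (a * (a * (b : G))) = b⁻¹ * (a * a) * b := by group
      rw [hid, fconj' b (hsq a), ← hA]
      simp [sq, mul_comm, mul_left_comm, mul_assoc]
    · simp [rep1, repy, kk1, kky, fone, mul_assoc]
    · -- (y, x)
      have huv : y * x = x * y := hQcomm y x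
      rw [huv, repxy, repy, repx, kkxy, kkx, kky]
      have hid : ((a * b : G))⁻¹ * (b * a) = b⁻¹ * a⁻¹ * (b⁻¹)⁻¹ * (a⁻¹)⁻¹ := by group
      rw [hid, fsqcomm b⁻¹ a⁻¹, mul_one, mul_comm]
    · -- (y, y)
      rw [hQsq y, rep1, repy, kk1, kky]
      have : (1 : G)⁻¹ * (b * b) = b * b := by group
      rw [this, one_mul, ← hB, sq]
    · -- (y, x*y)
      have huv : y * (x * y) = x := by
        rw [hQcomm x y, ← mul_assoc, hQsq y, one_mul]
      rw [huv, repx, repy, repxy, kkx, kky, kkxy]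
      have hid : a⁻¹ * (b * (a * (b : G))) =
          (a⁻¹ * b * (a⁻¹)⁻¹ * b⁻¹) * (b * b) := by group
      rw [hid, fmul (hcm a⁻¹ b) (hsq b), mul_pow, fsqcomm a⁻¹ b, one_mul, ← hB]
      simp [sq, mul_comm, mul_left_comm, mul_assoc]
    · simp [rep1, repxy, kk1, kkxy, fone, mul_assoc]
    · -- (x*y, x)
      have huv : (x * y) * x = y := by
        rw [hQcomm (x * y) x, ← mul_assoc, hQsq x, one_mul]
      rw [huv, repy, repxy, repx, kky, kkxy, kkx]
      have hid : b⁻¹ * ((a * b) * a) = (b⁻¹ * a * (b⁻¹)⁻¹ * a⁻¹) * (a * (a : G)) := by group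
      rw [hid, fmul (hcm b⁻¹ a) (hsq a), mul_pow, fsqcomm b⁻¹ a, one_mul, ← hA]
      simp [sq, mul_comm, mul_left_comm, mul_assoc]
    · -- (x*y, y)
      have huv : (x * y) * y = x := by rw [mul_assoc, hQsq y, mul_one]
      rw [huv, repx, repxy, repy, kkx, kkxy, kky]
      have hid : a⁻¹ * ((a * b) * b) = b * (b : G) := by group
      rw [hid, ← hB]
      simp [sq, mul_comm, mul_left_comm, mul_assoc]
    · -- (x*y, x*y)
      rw [hQsq (x * y), rep1, repxy, kk1, kkxy]
      have hid : (1 : G)⁻¹ * ((a * b) * (a * b)) = (a * b) * (a * b) := by group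
      rw [hid, one_mul, fsqmul a b, mul_pow, mul_pow, fsqcomm a b, one_mul, ← hA, ← hB]
      simp [sq, mul_comm, mul_left_comm, mul_assoc]
  -- the extension
  refine ⟨{ toFun := fun g => kk (g : G ⧸ N) * f ((rep ((g : G ⧸ N)))⁻¹ * g) ^ 2
            map_one' := ?_
            map_mul' := ?_ }, ?_⟩
  · show kk ((1 : G) : G ⧸ N) * f ((rep (((1 : G) : G ⧸ N)))⁻¹ * 1) ^ 2 = 1
    have h1 : ((1 : G) : G ⧸ N) = 1 := rfl
    rw [h1, kk1, rep1, one_mul]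
    have : (1 : G)⁻¹ * 1 = 1 := by group
    rw [this, fone, one_pow]
  · intro g h
    show kk ((g * h : G) : G ⧸ N) * f ((rep (((g * h : G) : G ⧸ N)))⁻¹ * (g * h)) ^ 2 =
      (kk (g : G ⧸ N) * f ((rep ((g : G ⧸ N)))⁻¹ * g) ^ 2) *
      (kk (h : G ⧸ N) * f ((rep ((h : G ⧸ N)))⁻¹ * h) ^ 2)
    set u : G ⧸ N := (g : G ⧸ N)
    set v : G ⧸ N := (h : G ⧸ N)
    have hm : ((g * h : G) : G ⧸ N) = u * v := rfl
    rw [hm]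
    have hid : (rep (u * v))⁻¹ * (g * h) =
        ((rep (u * v))⁻¹ * (rep u * rep v)) *
          (((rep v)⁻¹ * ((rep u)⁻¹ * g) * rep v) * ((rep v)⁻¹ * h)) := by group
    rw [hid, fmul (memom u v)
        (mul_mem (hN.conj_mem' _ (memng g) _) (memng h)),
      fmul (hN.conj_mem' _ (memng g) _) (memng h), fconj' (rep v) (memng g)]
    rw [mul_pow, mul_pow, ← mul_assoc, hcoc u v]
    exact mul_mul_mul_comm _ _ _ _
  · intro n hn
    show kk ((n : G ⧸ N)) * f ((rep ((n : G ⧸ N)))⁻¹ * n) ^ 2 = (τ ⟨n, hn⟩) ^ 2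
    have h1 : ((n : G) : G ⧸ N) = 1 := (QuotientGroup.eq_one_iff n).mpr hn
    rw [h1, kk1, rep1, one_mul]
    have : (1 : G)⁻¹ * n = n := by group
    rw [this, fmem hn]
end

section
/- Let N be a normal subgroup of a finite group G such that G/N is cyclic, and let τ be a G-stable linear character of N. Then τ extends to a linear character of G. -/
/-- If `G/N` is cyclic and `τ` is a `G`-stable linear character of `N`,
then `τ` extends to a linear character of `G`. -/
theorem stmt_2 {G : Type*} [Group G] [Finite G] (N : Subgroup G) [hN : N.Normal]
    [IsCyclic (G ⧸ N)]
    (τ : N →* ℂˣ)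
    (hτ : ∀ (g n : G) (hn : n ∈ N), τ ⟨g * n * g⁻¹, hN.conj_mem n hn g⟩ = τ ⟨n, hn⟩) :
    ∃ lam : G →* ℂˣ, ∀ (n : G) (hn : n ∈ N), lam n = τ ⟨n, hn⟩ := by
  classical
  have τcongr : ∀ (p q : G) (hp : p ∈ N) (hq : q ∈ N), p = q → τ ⟨p, hp⟩ = τ ⟨q, hq⟩ := by
    rintro p q hp hq rfl; rfl
  have τmul : ∀ (p q : G) (hp : p ∈ N) (hq : q ∈ N),
      τ ⟨p * q, mul_mem hp hq⟩ = τ ⟨p, hp⟩ * τ ⟨q, hq⟩ := fun p q hp hq =>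
    map_mul τ ⟨p, hp⟩ ⟨q, hq⟩
  obtain ⟨ξ, hξ⟩ := IsCyclic.exists_generator (α := G ⧸ N)
  obtain ⟨g, hg⟩ := QuotientGroup.mk'_surjective N ξ
  have hg' : (g : G ⧸ N) = ξ := hg
  set d := orderOf ξ with hd
  have hdpos : 0 < d := orderOf_pos ξ
  -- choose exponents
  have hk : ∀ x : G, ∃ m : ℕ, m < d ∧ (x : G ⧸ N) = ξ ^ m := by
    intro x
    obtain ⟨m, hm⟩ := hξ (x : G ⧸ N)
    have hd0 : (d : ℤ) ≠ 0 := by exact_mod_cast hdpos.ne'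
    refine ⟨(m % d).toNat, ?_, ?_⟩
    · have h1 := Int.emod_lt_of_pos m (by exact_mod_cast hdpos : (0:ℤ) < d)
      have h2 := Int.emod_nonneg m hd0
      omega
    · rw [← hm, ← zpow_natCast, Int.toNat_of_nonneg (Int.emod_nonneg m hd0)]
      exact (zpow_mod_orderOf ξ m).symm
  choose k hklt hkspec using hk
  have hmem : ∀ x : G, (g ^ k x)⁻¹ * x ∈ N := by
    intro x
    rw [← QuotientGroup.eq_one_iff]
    have : ((((g ^ k x)⁻¹ * x : G)) : G ⧸ N) = ((g : G ⧸ N) ^ k x)⁻¹ * (x : G ⧸ N) := by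
      push_cast; rfl
    rw [this, hg', hkspec x, inv_mul_cancel]
  -- g ^ d ∈ N
  have hgd : g ^ d ∈ N := by
    rw [← QuotientGroup.eq_one_iff]
    have : (((g ^ d : G)) : G ⧸ N) = (g : G ⧸ N) ^ d := by push_cast; rfl
    rw [this, hg', pow_orderOf_eq_one]
  -- root z
  obtain ⟨w, hw⟩ := IsAlgClosed.exists_pow_nat_eq ((τ ⟨g ^ d, hgd⟩ : ℂˣ) : ℂ) hdpos
  have hwne : w ≠ 0 := by
    intro h; rw [h] at hw
    exact (τ ⟨g ^ d, hgd⟩).ne_zero (by rw [← hw, zero_pow hdpos.ne'])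
  set z : ℂˣ := Units.mk0 w hwne with hzdef
  have hz : z ^ d = τ ⟨g ^ d, hgd⟩ := by
    ext; rw [Units.val_pow_eq_pow_val]; exact hw
  -- the function
  set f : G → ℂˣ := fun x => z ^ k x * τ ⟨(g ^ k x)⁻¹ * x, hmem x⟩ with hf
  have hfmul : ∀ x y : G, f (x * y) = f x * f y := by
    intro x y
    set kx := k x; set ky := k y; set kz := k (x * y)
    have hcong : kx + ky ≡ kz [MOD d] := by
      have h1 : ξ ^ (kx + ky) = ξ ^ kz := by
        rw [pow_add, ← hkspec x, ← hkspec y, ← hkspec (x * y)]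
        push_cast; rfl
      exact pow_eq_pow_iff_modEq.mp h1
    have hkzle : kz = (kx + ky) % d := by
      have := hcong; unfold Nat.ModEq at this
      rw [Nat.mod_eq_of_lt (hklt (x * y))] at this
      omega
    have hle : kz ≤ kx + ky := by rw [hkzle]; exact Nat.mod_le _ _
    set e := kx + ky - kz with hedef
    have he : kz + e = kx + ky := by omega
    have hdvd : d ∣ e := (Nat.modEq_iff_dvd' hle).mp hcong.symm
    have he0 : e = 0 ∨ e = d := by
      obtain ⟨m, hm⟩ := hdvd
      have helt : e < 2 * d := by
        have := hklt x; have := hklt y; omega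
      have hm2 : m < 2 := by
        by_contra h
        push_neg at h
        have : 2 * d ≤ d * m := by calc 2 * d = d * 2 := by ring
                                          _ ≤ d * m := Nat.mul_le_mul_left d h
        omega
      interval_cases m
      · left; omega
      · right; omega
    have hge : g ^ e ∈ N := by
      rcases he0 with h | h
      · rw [h, pow_zero]; exact one_mem N
      · rw [h]; exact hgd
    have hze : z ^ e = τ ⟨g ^ e, hge⟩ := by
      rcases he0 with h | h
      · have h1 : z ^ e = 1 := by rw [h, pow_zero]
        have h2 : τ ⟨g ^ e, hge⟩ = 1 := by
          have h3 : (⟨g ^ e, hge⟩ : N) = 1 := by ext; simp [h]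
          rw [h3, map_one]
        rw [h1, h2]
      · have h1 : z ^ e = z ^ d := by rw [h]
        rw [h1, hz]
        exact τcongr _ _ _ _ (by rw [h])
    -- product decomposition
    have hprod : (g ^ kz)⁻¹ * (x * y) =
        g ^ e * ((g ^ ky)⁻¹ * ((g ^ kx)⁻¹ * x) * ((g ^ ky)⁻¹)⁻¹) * ((g ^ ky)⁻¹ * y) := by
      have h1 : g ^ e = (g ^ kz)⁻¹ * (g ^ kx * g ^ ky) := by
        rw [← pow_add, ← he, pow_add]; group
      rw [h1]
      group
    have hconjmem : (g ^ ky)⁻¹ * ((g ^ kx)⁻¹ * x) * ((g ^ ky)⁻¹)⁻¹ ∈ N :=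
      hN.conj_mem _ (hmem x) _
    calc f (x * y) = z ^ kz * τ ⟨(g ^ kz)⁻¹ * (x * y), hmem (x * y)⟩ := rfl
      _ = z ^ kz * τ ⟨g ^ e * ((g ^ ky)⁻¹ * ((g ^ kx)⁻¹ * x) * ((g ^ ky)⁻¹)⁻¹) * ((g ^ ky)⁻¹ * y),
            mul_mem (mul_mem hge hconjmem) (hmem y)⟩ := by
          rw [τcongr _ _ _ _ hprod]
      _ = z ^ kz * (τ ⟨g ^ e, hge⟩ * τ ⟨(g ^ ky)⁻¹ * ((g ^ kx)⁻¹ * x) * ((g ^ ky)⁻¹)⁻¹, hconjmem⟩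
            * τ ⟨(g ^ ky)⁻¹ * y, hmem y⟩) := by
          rw [τmul _ _ (mul_mem hge hconjmem) (hmem y), τmul _ _ hge hconjmem]
      _ = z ^ kz * (z ^ e * τ ⟨(g ^ kx)⁻¹ * x, hmem x⟩ * τ ⟨(g ^ ky)⁻¹ * y, hmem y⟩) := by
          rw [hτ ((g ^ ky)⁻¹) _ (hmem x), hze]
      _ = f x * f y := by
          have hzz : z ^ kz * z ^ e = z ^ kx * z ^ ky := by rw [← pow_add, he, pow_add]
          show z ^ kz * (z ^ e * τ ⟨(g ^ kx)⁻¹ * x, hmem x⟩ * τ ⟨(g ^ ky)⁻¹ * y, hmem y⟩)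
              = z ^ kx * τ ⟨(g ^ kx)⁻¹ * x, hmem x⟩ * (z ^ ky * τ ⟨(g ^ ky)⁻¹ * y, hmem y⟩)
          rw [mul_assoc (z ^ e), ← mul_assoc (z ^ kz), hzz, mul_mul_mul_comm]
  refine ⟨MonoidHom.mk' f hfmul, ?_⟩
  intro n hn
  have hkn : k n = 0 := by
    have h1 : ξ ^ k n = 1 := by
      rw [← hkspec n, QuotientGroup.eq_one_iff]; exact hn
    exact Nat.eq_zero_of_dvd_of_lt (orderOf_dvd_of_pow_eq_one h1) (hklt n)
  show f n = τ ⟨n, hn⟩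
  calc f n = z ^ k n * τ ⟨(g ^ k n)⁻¹ * n, hmem n⟩ := rfl
    _ = τ ⟨(g ^ k n)⁻¹ * n, hmem n⟩ := by
        have hz1 : z ^ k n = 1 := by rw [hkn, pow_zero]
        rw [hz1, one_mul]
    _ = τ ⟨n, hn⟩ := τcongr _ _ _ _ (by rw [hkn, pow_zero, inv_one, one_mul])
end

section
/- Let N ⊴ G be finite groups with G/N abelian, and let θ be an irreducible complex character of N. If χ₁ and χ₂ are irreducible characters of G such that θ is an irreducible constituent of the restriction of both χ₁ and χ₂ to N, then there exists a linear character η of G with N contained in its kernel such that χ₂ = χ₁·η. -/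
open CategoryTheory

open Module

namespace Stmt3Aux

/-- Bridge: a categorically simple `FDRep` has no nontrivial invariant submodules. -/
lemma invariant_eq_bot_or_top {k : Type} [Field k] {G : Type} [Monoid G] (X : FDRep k G)
    [Simple X] (p : Submodule k X) (hp : ∀ g : G, ∀ x ∈ p, X.ρ g x ∈ p) : p = ⊥ ∨ p = ⊤ := by
  rcases eq_or_ne p ⊥ with h | h
  · exact Or.inl h
  right
  let σ : Representation k G p :=
    { toFun := fun g => (X.ρ g).restrict (hp g)
      map_one' := by ext x; simp
      map_mul' := fun g h => by ext x; simp }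
  let Y : FDRep k G := FDRep.of σ
  let ι : Y ⟶ X := ⟨(FGModuleCat.ofHom p.subtype : Y.V ⟶ X.V), fun g => rfl⟩
  have hι0 : ι ≠ 0 := by
    intro h0
    obtain ⟨x, hxp, hx⟩ := Submodule.exists_mem_ne_zero_of_ne_bot h
    have : ι.hom = 0 := by rw [h0]; exact Action.zero_hom
    exact hx (congrArg (fun (f : Y.V ⟶ X.V) => f ⟨x, hxp⟩) this)
  have hmono : Mono ι := by
    let F := Action.forget (FGModuleCat k) (MonCat.of G) ⋙ forget₂ (FGModuleCat k) (ModuleCat k)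
    have : Mono (F.map ι) := (ModuleCat.mono_iff_injective _).mpr (Submodule.injective_subtype p)
    exact F.mono_of_mono_map this
  have := isIso_of_mono_of_nonzero hι0
  have hsurj : Function.Surjective (p.subtype) := by
    intro x
    refine ⟨(CategoryTheory.inv ι).hom x, ?_⟩
    have h1 : (CategoryTheory.inv ι ≫ ι) = 𝟙 X := IsIso.inv_hom_id ι
    have h2 := congrArg Action.Hom.hom h1
    rw [Action.comp_hom, Action.id_hom] at h2
    exact congrArg (fun (f : X.V ⟶ X.V) => f x) h2
  rw [Submodule.eq_top_iff']
  intro x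
  obtain ⟨y, hy⟩ := hsurj x
  exact hy ▸ y.2

lemma nontrivial_of_simple {k G : Type} [Field k] [Monoid G] (X : FDRep k G) [Simple X] :
    Nontrivial X := by
  by_contra h
  rw [not_nontrivial_iff_subsingleton] at h
  apply CategoryTheory.id_nonzero X
  apply Action.hom_ext
  exact FGModuleCat.hom_ext (LinearMap.ext fun x => @Subsingleton.elim _ h _ _)

/-- From nonvanishing of the character pairing, produce a nonzero equivariant map. -/
lemma exists_equivariant {k : Type} [Field k] {H : Type} [Group H] [Fintype H]
    [Invertible (Fintype.card H : k)] (A B : FDRep k H)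
    (h : ∑ n : H, A.character n⁻¹ * B.character n ≠ 0) :
    ∃ f : A →ₗ[k] B, f ≠ 0 ∧ ∀ n : H, (B.ρ n) ∘ₗ f = f ∘ₗ (A.ρ n) := by
  set L := Representation.linHom A.ρ B.ρ with hL
  haveI : Invertible (Nat.card H : k) := by rwa [Nat.card_eq_fintype_card]
  have key := FDRep.average_char_eq_finrank_invariants (FDRep.of L)
  have hchar : ∀ g : H, (FDRep.of L).character g = A.character g⁻¹ * B.character g :=
    fun g => FDRep.char_linHom A B g
  rw [Finset.sum_congr rfl (fun g _ => hchar g)] at key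
  have hfin : finrank k (Representation.invariants (FDRep.of L).ρ) ≠ 0 := by
    intro h0
    rw [h0, Nat.cast_zero] at key
    apply h
    exact (mul_eq_zero.mp key).resolve_left (inv_ne_zero (Invertible.ne_zero _))
  have hne : Representation.invariants (FDRep.of L).ρ ≠ ⊥ := by
    intro h0
    rw [h0, finrank_bot] at hfin
    exact hfin rfl
  obtain ⟨f, hfmem, hf0⟩ := Submodule.exists_mem_ne_zero_of_ne_bot hne
  refine ⟨f, hf0, fun n => ?_⟩
  have h1 : (B.ρ n) ∘ₗ f ∘ₗ (A.ρ n⁻¹) = f := hfmem n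
  calc (B.ρ n) ∘ₗ f = ((B.ρ n) ∘ₗ f ∘ₗ (A.ρ n⁻¹)) ∘ₗ (A.ρ n) := by
        ext x
        simp only [LinearMap.comp_apply]
        congr 1
        rw [← Module.End.mul_apply, ← map_mul, inv_mul_cancel, map_one, Module.End.one_apply]
    _ = f ∘ₗ (A.ρ n) := by rw [h1]

/-- A family of operators that commute on an invariant subspace `W ≠ ⊥` has a common
eigenvector in `W`. -/
lemma exists_common_eigenvector {k M G : Type} [Field k] [IsAlgClosed k] [AddCommGroup M]
    [Module k M] [FiniteDimensional k M] [Group G] (L : G →* Module.End k M)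
    (W : Submodule k M) (hW0 : W ≠ ⊥) (hWinv : ∀ g : G, ∀ x ∈ W, L g x ∈ W)
    (hcomm : ∀ g h : G, ∀ x ∈ W, L g (L h x) = L h (L g x)) :
    ∃ f, f ∈ W ∧ f ≠ 0 ∧ ∃ η₀ : G → k, ∀ g, L g f = η₀ g • f := by
  set S : Set (Submodule k M) :=
    {p | p ≤ W ∧ p ≠ ⊥ ∧ ∀ g : G, ∀ x ∈ p, L g x ∈ p} with hS
  have hWS : W ∈ S := ⟨le_refl W, hW0, hWinv⟩
  set I : Set ℕ := (fun p : Submodule k M => finrank k p) '' S with hI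
  have hIne : I.Nonempty := ⟨finrank k W, W, hWS, rfl⟩
  obtain ⟨p, hpS, hpI⟩ := Nat.sInf_mem hIne
  have hmin : ∀ q ∈ S, finrank k p ≤ finrank k q := by
    intro q hq
    have h1 := Nat.sInf_le (show finrank k q ∈ I from ⟨q, hq, rfl⟩)
    have h2 : finrank k p = sInf I := hpI
    omega
  have claim : ∀ g : G, ∃ μ : k, ∀ x ∈ p, L g x = μ • x := by
    intro g
    haveI : Nontrivial p := Submodule.nontrivial_iff_ne_bot.mpr hpS.2.1
    set A : Module.End k p := (L g).restrict (hpS.2.2 g) with hA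
    obtain ⟨μ, hμ⟩ := Module.End.exists_eigenvalue A
    obtain ⟨v, hv⟩ := hμ.exists_hasEigenvector
    refine ⟨μ, ?_⟩
    set q : Submodule k M := p ⊓ LinearMap.ker ((L g) - μ • (1 : Module.End k M)) with hq
    have hqmem : ∀ x, x ∈ q ↔ x ∈ p ∧ L g x = μ • x := by
      intro x
      simp only [hq, Submodule.mem_inf, LinearMap.mem_ker, LinearMap.sub_apply,
        LinearMap.smul_apply, Module.End.one_apply, sub_eq_zero]
    have hvq : (v : M) ∈ q := by
      rw [hqmem]
      refine ⟨v.2, ?_⟩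
      have := hv.apply_eq_smul
      have h2 := congrArg (Subtype.val) this
      simpa [hA, LinearMap.restrict_apply] using h2
    have hqS : q ∈ S := by
      refine ⟨le_trans inf_le_left hpS.1, ?_, ?_⟩
      · intro h0
        rw [h0] at hvq
        rw [Submodule.mem_bot] at hvq
        exact hv.2 (Subtype.ext hvq)
      · intro h x hx
        rw [hqmem] at hx ⊢
        refine ⟨hpS.2.2 h x hx.1, ?_⟩
        rw [hcomm g h x (hpS.1 hx.1), hx.2, map_smul]
    have hqp : q = p := Submodule.eq_of_le_of_finrank_le inf_le_left (hmin q hqS)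
    intro x hx
    rw [← hqp] at hx
    exact ((hqmem x).mp hx).2
  choose η₀ hη₀ using claim
  obtain ⟨f, hfp, hf0⟩ := Submodule.exists_mem_ne_zero_of_ne_bot hpS.2.1
  exact ⟨f, hpS.1 hfp, hf0, η₀, fun g => hη₀ g f hfp⟩

end Stmt3Aux

open Stmt3Aux

/-- If `G/N` is abelian and the irreducible characters `χ₁, χ₂` of `G` both cover an
irreducible character `θ` of `N`, then `χ₂ = χ₁ · η` for some linear character `η` of `G`
trivial on `N`. -/
theorem stmt_3 {G : Type} [Group G] [Fintype G] (N : Subgroup G) [N.Normal] [Fintype N]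
    (hab : ∀ a b : G ⧸ N, a * b = b * a)
    (θ : FDRep ℂ N) [Simple θ] (χ₁ χ₂ : FDRep ℂ G) [Simple χ₁] [Simple χ₂]
    (h₁ : ∑ n : N, χ₁.character (n : G) * θ.character n⁻¹ ≠ 0)
    (h₂ : ∑ n : N, χ₂.character (n : G) * θ.character n⁻¹ ≠ 0) :
    ∃ η : G →* ℂˣ, (∀ n ∈ N, η n = 1) ∧
      ∀ g : G, χ₂.character g = χ₁.character g * (η g : ℂ) := by
  haveI : Invertible ((Fintype.card N : ℂ)) :=
    invertibleOfNonzero (Nat.cast_ne_zero.mpr Fintype.card_ne_zero)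
  -- restrictions to N
  set Res₁ : FDRep ℂ N := FDRep.of (χ₁.ρ.comp N.subtype) with hRes₁
  set Res₂ : FDRep ℂ N := FDRep.of (χ₂.ρ.comp N.subtype) with hRes₂
  have hc₁ : ∀ m : N, Res₁.character m = χ₁.character ↑m := fun m => rfl
  have hc₂ : ∀ m : N, Res₂.character m = χ₂.character ↑m := fun m => rfl
  -- helpers on inverses
  have hro : ∀ (X : FDRep ℂ G) (g : G) (x : X), X.ρ g (X.ρ g⁻¹ x) = x := fun X g x => by
    rw [← Module.End.mul_apply, ← map_mul, mul_inv_cancel, map_one, Module.End.one_apply]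
  have hro2 : ∀ (X : FDRep ℂ G) (g : G) (x : X), X.ρ g⁻¹ (X.ρ g x) = x := fun X g x => by
    rw [← Module.End.mul_apply, ← map_mul, inv_mul_cancel, map_one, Module.End.one_apply]
  -- Step A : nonzero N-equivariant maps
  obtain ⟨f₁, hf₁0, hf₁⟩ := exists_equivariant Res₁ θ (by
    rw [show ∑ n : N, Res₁.character n⁻¹ * θ.character n
        = ∑ n : N, χ₁.character ↑n * θ.character n⁻¹ from
      Fintype.sum_equiv (Equiv.inv N) _ _ (fun n => by rw [hc₁]; simp [mul_comm])]
    exact h₁)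
  obtain ⟨f₂, hf₂0, hf₂⟩ := exists_equivariant θ Res₂ (by
    rw [show ∑ n : N, θ.character n⁻¹ * Res₂.character n
        = ∑ n : N, χ₂.character ↑n * θ.character n⁻¹ from
      Finset.sum_congr rfl (fun n _ => by rw [hc₂, mul_comm])]
    exact h₂)
  haveI : Nontrivial θ := nontrivial_of_simple θ
  have hf₁p : ∀ (n : N) (x : χ₁), θ.ρ n (f₁ x) = f₁ (χ₁.ρ ↑n x) := fun n x =>
    LinearMap.congr_fun (hf₁ n) x
  have hf₂p : ∀ (n : N) (x : θ), χ₂.ρ ↑n (f₂ x) = f₂ (θ.ρ n x) := fun n x =>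
    LinearMap.congr_fun (hf₂ n) x
  have hrange₁ : LinearMap.range f₁ = ⊤ := by
    have hinv : ∀ (n : N), ∀ x ∈ LinearMap.range f₁, θ.ρ n x ∈ LinearMap.range f₁ := by
      rintro n x ⟨y, rfl⟩
      exact ⟨χ₁.ρ ↑n y, (hf₁p n y).symm⟩
    rcases invariant_eq_bot_or_top θ (LinearMap.range f₁) hinv with h | h
    · exact absurd (LinearMap.range_eq_bot.mp h) hf₁0
    · exact h
  have hker₂ : LinearMap.ker f₂ = ⊥ := by
    have hinv : ∀ (n : N), ∀ x ∈ LinearMap.ker f₂, θ.ρ n x ∈ LinearMap.ker f₂ := by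
      intro n x hx
      rw [LinearMap.mem_ker] at hx ⊢
      rw [← hf₂p n x, hx, map_zero]
    rcases invariant_eq_bot_or_top θ (LinearMap.ker f₂) hinv with h | h
    · exact h
    · exact absurd (LinearMap.ker_eq_top.mp h) hf₂0
  -- composite
  set f₀ : (χ₁ : Type) →ₗ[ℂ] (χ₂ : Type) := f₂ ∘ₗ f₁ with hf₀def
  have hf₀0 : f₀ ≠ 0 := by
    obtain ⟨x, hx⟩ := exists_ne (0 : θ)
    obtain ⟨y, hy⟩ := LinearMap.range_eq_top.mp hrange₁ x
    intro h0
    apply hx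
    have : f₂ x = 0 := by
      rw [← hy]
      exact LinearMap.congr_fun h0 y
    exact LinearMap.ker_eq_bot.mp hker₂ (by rw [this, map_zero])
  have hf₀comm : ∀ n : N, ∀ x : χ₁, χ₂.ρ ↑n (f₀ x) = f₀ (χ₁.ρ ↑n x) := by
    intro n x
    show χ₂.ρ ↑n (f₂ (f₁ x)) = f₂ (f₁ (χ₁.ρ ↑n x))
    rw [hf₂p n (f₁ x), hf₁p n x]
  -- Step B : the action on N-equivariant maps
  set L : Representation ℂ G ((χ₁ : Type) →ₗ[ℂ] (χ₂ : Type)) :=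
    Representation.linHom χ₁.ρ χ₂.ρ with hLdef
  have hLapp : ∀ (g : G) (u : (χ₁ : Type) →ₗ[ℂ] (χ₂ : Type)) (y : χ₁),
      (L g u) y = χ₂.ρ g (u (χ₁.ρ g⁻¹ y)) := fun _ _ _ => rfl
  set W : Submodule ℂ ((χ₁ : Type) →ₗ[ℂ] (χ₂ : Type)) :=
    { carrier := {u | ∀ n ∈ N, L n u = u}
      add_mem' := fun ha hb => fun n hn => by rw [map_add, ha n hn, hb n hn]
      zero_mem' := fun n hn => map_zero _
      smul_mem' := fun c u hu => fun n hn => by rw [map_smul, hu n hn] } with hWdef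
  have hmemW : ∀ u, u ∈ W ↔ ∀ n ∈ N, L n u = u := fun u => Iff.rfl
  have hf₀W : f₀ ∈ W := by
    rw [hmemW]
    intro n hn
    ext y
    rw [hLapp]
    rw [show χ₂.ρ n (f₀ (χ₁.ρ n⁻¹ y)) = f₀ (χ₁.ρ n (χ₁.ρ n⁻¹ y)) from hf₀comm ⟨n, hn⟩ _]
    rw [hro χ₁ n y]
  have hW0 : W ≠ ⊥ := by
    intro h0
    have hmem := hf₀W
    rw [h0] at hmem
    exact hf₀0 ((Submodule.mem_bot ℂ).mp hmem)
  have hWinv : ∀ g : G, ∀ u ∈ W, L g u ∈ W := by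
    intro g u hu
    rw [hmemW] at hu ⊢
    intro n hn
    have hc : g⁻¹ * n * g ∈ N := by
      have := (‹N.Normal›).conj_mem n hn g⁻¹
      simpa using this
    have h1 : (n : G) * g = g * (g⁻¹ * n * g) := by group
    calc L n (L g u) = L (n * g) u := by rw [map_mul]; rfl
      _ = L (g * (g⁻¹ * n * g)) u := by rw [h1]
      _ = L g (L (g⁻¹ * n * g) u) := by rw [map_mul]; rfl
      _ = L g u := by rw [hu _ hc]
  have hWcomm : ∀ g h : G, ∀ u ∈ W, L g (L h u) = L h (L g u) := by
    intro g h u hu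
    rw [hmemW] at hu
    have hc : (h * g)⁻¹ * (g * h) ∈ N := by
      have h1 : ((h * g : G) : G ⧸ N) = ((g * h : G) : G ⧸ N) := by
        rw [QuotientGroup.mk_mul, QuotientGroup.mk_mul, hab]
      exact QuotientGroup.eq.mp h1
    have h2 : g * h = (h * g) * ((h * g)⁻¹ * (g * h)) := by group
    calc L g (L h u) = L (g * h) u := by rw [map_mul]; rfl
      _ = L ((h * g) * ((h * g)⁻¹ * (g * h))) u := by rw [← h2]
      _ = L (h * g) (L ((h * g)⁻¹ * (g * h)) u) := by rw [map_mul]; rfl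
      _ = L (h * g) u := by rw [hu _ hc]
      _ = L h (L g u) := by rw [map_mul]; rfl
  obtain ⟨f, hfW, hf0, η₀, hη⟩ := exists_common_eigenvector L W hW0 hWinv hWcomm
  rw [hmemW] at hfW
  -- the scalars form a character
  have hsc : ∀ a b : ℂ, a • f = b • f → a = b := by
    intro a b hab'
    by_contra hne
    have h0 : (a - b) • f = 0 := by rw [sub_smul, hab', sub_self]
    rcases smul_eq_zero.mp h0 with h | h
    · exact hne (sub_eq_zero.mp h)
    · exact hf0 h
  have hmul : ∀ g h : G, η₀ (g * h) = η₀ g * η₀ h := by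
    intro g h
    apply hsc
    rw [← hη (g * h)]
    calc L (g * h) f = L g (L h f) := by rw [map_mul]; rfl
      _ = L g (η₀ h • f) := by rw [hη h]
      _ = η₀ h • L g f := by rw [map_smul]
      _ = η₀ h • η₀ g • f := by rw [hη g]
      _ = (η₀ g * η₀ h) • f := by rw [smul_smul, mul_comm]
  have hone : η₀ 1 = 1 := by
    apply hsc
    rw [← hη 1, map_one, one_smul]
    rfl
  have hNone : ∀ n ∈ N, η₀ n = 1 := by
    intro n hn
    apply hsc
    rw [← hη n, one_smul, hfW n hn]
  have hinvmul : ∀ g : G, η₀ g * η₀ g⁻¹ = 1 := by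
    intro g
    rw [← hmul, mul_inv_cancel, hone]
  have hinvmul' : ∀ g : G, η₀ g⁻¹ * η₀ g = 1 := by
    intro g
    rw [← hmul, inv_mul_cancel, hone]
  have ηne : ∀ g : G, η₀ g ≠ 0 := fun g => left_ne_zero_of_mul_eq_one (hinvmul g)
  set η : G →* ℂˣ :=
    { toFun := fun g => ⟨η₀ g, η₀ g⁻¹, hinvmul g, hinvmul' g⟩
      map_one' := Units.ext hone
      map_mul' := fun a b => Units.ext (hmul a b) } with hηdef
  -- Step C: f is a twisted isomorphism
  have hrel : ∀ (g : G) (x : χ₁), χ₂.ρ g (f x) = η₀ g • f (χ₁.ρ g x) := by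
    intro g x
    have h1 := congrArg (fun u : (χ₁ : Type) →ₗ[ℂ] (χ₂ : Type) => u (χ₁.ρ g x)) (hη g)
    simp only [LinearMap.smul_apply] at h1
    rw [hLapp, hro2 χ₁ g x] at h1
    exact h1
  have hker : LinearMap.ker f = ⊥ := by
    have hinv : ∀ g : G, ∀ x ∈ LinearMap.ker f, χ₁.ρ g x ∈ LinearMap.ker f := by
      intro g x hx
      rw [LinearMap.mem_ker] at hx ⊢
      have := hrel g x
      rw [hx, map_zero] at this
      exact (smul_eq_zero.mp this.symm).resolve_left (ηne g)
    rcases invariant_eq_bot_or_top χ₁ (LinearMap.ker f) hinv with h | h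
    · exact h
    · exact absurd (LinearMap.ker_eq_top.mp h) hf0
  have hrange : LinearMap.range f = ⊤ := by
    have hinv : ∀ g : G, ∀ x ∈ LinearMap.range f, χ₂.ρ g x ∈ LinearMap.range f := by
      rintro g x ⟨y, rfl⟩
      refine ⟨η₀ g • χ₁.ρ g y, ?_⟩
      rw [map_smul, ← hrel g y]
    rcases invariant_eq_bot_or_top χ₂ (LinearMap.range f) hinv with h | h
    · exact absurd (LinearMap.range_eq_bot.mp h) hf0
    · exact h
  set e : (χ₁ : Type) ≃ₗ[ℂ] (χ₂ : Type) :=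
    LinearEquiv.ofBijective f ⟨LinearMap.ker_eq_bot.mp hker, LinearMap.range_eq_top.mp hrange⟩
    with hedef
  refine ⟨η, fun n hn => Units.ext (hNone n hn), fun g => ?_⟩
  have hconj : χ₂.ρ g = η₀ g • (e.conj (χ₁.ρ g)) := by
    ext x
    rw [LinearMap.smul_apply, LinearEquiv.conj_apply, LinearMap.comp_apply, LinearMap.comp_apply]
    have h1 : f (e.symm x) = x := e.apply_symm_apply x
    calc χ₂.ρ g x = χ₂.ρ g (f (e.symm x)) := by rw [h1]
      _ = η₀ g • f (χ₁.ρ g (e.symm x)) := hrel g _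
      _ = η₀ g • e (χ₁.ρ g (e.symm x)) := rfl
  show χ₂.character g = χ₁.character g * (η g : ℂ)
  have htr : χ₂.character g = LinearMap.trace ℂ _ (χ₂.ρ g) := rfl
  rw [htr, hconj, map_smul, LinearMap.trace_conj' (χ₁.ρ g) e]
  show η₀ g * χ₁.character g = χ₁.character g * η₀ g
  ring
end

section
/- Let k be an algebraically closed field of characteristic ℓ with Frobenius automorphism σ : λ ↦ λ^ℓ, and let A be a finite dimensional k-algebra. Then A is defined over the finite field F_{ℓ^m} (that is, there exists an F_{ℓ^m}-algebra A₀ with A ≅ k ⊗_{F_{ℓ^m}} A₀) if and only if A ≅ A^{σ^m} as k-algebras. -/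
open Polynomial Finset

variable {k : Type} [Field k] [IsAlgClosed k]

/-- Any `q`-semilinear bijection of a nonzero f.d. vector space over an algebraically
closed field has a nonzero fixed vector. -/
lemma exists_fixed_vector {V : Type} [AddCommGroup V] [Module k V] [FiniteDimensional k V]
    (q : ℕ) (hq : 1 < q) (φ : V → V) (hadd : ∀ u v, φ (u + v) = φ u + φ v)
    (hsmul : ∀ (c : k) (v : V), φ (c • v) = c ^ q • φ v)
    (hbij : Function.Bijective φ) (v : V) (hv : v ≠ 0) :
    ∃ w : V, w ≠ 0 ∧ φ w = w := by
  classical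
  have hq0 : 0 < q := by omega
  set φM : V →+ V := AddMonoidHom.mk' φ hadd with hφM
  have hφM' : ∀ x, φM x = φ x := fun _ => rfl
  set g : ℕ → V := fun i => φ^[i] v with hg
  have hgsucc : ∀ i, g (i + 1) = φ (g i) := fun i => Function.iterate_succ_apply' φ i v
  -- there is a linear dependence
  have hdep : ∃ r, ¬ LinearIndependent k (fun i : Fin r => g i) := by
    refine ⟨Module.finrank k V + 1, fun h => ?_⟩
    have := h.fintype_card_le_finrank
    simp at this
  set R₀ := Nat.find hdep with hR₀
  have hnot : ¬ LinearIndependent k (fun i : Fin R₀ => g i) := Nat.find_spec hdep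
  have hmin : ∀ s, s < R₀ → LinearIndependent k (fun i : Fin s => g i) := by
    intro s hs
    by_contra h
    have h2 : R₀ ≤ s := hR₀ ▸ Nat.find_le h
    omega
  have hsnoc : ∀ s : ℕ, (fun i : Fin (s + 1) => g (i : ℕ)) =
      Fin.snoc (fun i : Fin s => g (i : ℕ)) (g s) := by
    intro s; funext i
    refine Fin.lastCases ?_ ?_ i
    · simp
    · intro j; simp
  have hR₀pos : R₀ ≠ 0 := by
    intro h
    apply hnot
    rw [h]
    exact linearIndependent_empty_type
  obtain ⟨R, hR⟩ : ∃ R, R₀ = R + 1 := ⟨R₀ - 1, by omega⟩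
  have hindepR : LinearIndependent k (fun i : Fin R => g i) := hmin R (by omega)
  have hmem : g R ∈ Submodule.span k (Set.range fun i : Fin R => g i) := by
    rw [hR, hsnoc R, linearIndependent_fin_snoc] at hnot
    push_neg at hnot
    exact hnot hindepR
  obtain ⟨cF, hcF⟩ := (Submodule.mem_span_range_iff_exists_fun k).mp hmem
  set c : ℕ → k := fun i => if h : i < R then cF ⟨i, h⟩ else 0 with hcdef
  have hcsum : ∑ i ∈ range R, c i • g i = g R := by
    rw [← Fin.sum_univ_eq_sum_range (fun i => c i • g i) R, ← hcF]
    refine Finset.sum_congr rfl fun i _ => ?_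
    simp [hcdef, i.isLt]
  have hRpos : 0 < R := by
    rcases Nat.eq_zero_or_pos R with h | h
    · exfalso
      subst h
      rw [show (Set.range fun i : Fin 0 => g (i:ℕ)) = (∅ : Set V) from Set.range_eq_empty _,
        Submodule.span_empty, Submodule.mem_bot] at hmem
      exact hv (by simpa [hg] using hmem)
    · exact h
  obtain ⟨s, hsR⟩ : ∃ s, R = s + 1 := ⟨R - 1, by omega⟩
  -- the constant coefficient is nonzero
  have hc0 : c 0 ≠ 0 := by
    intro h0
    choose d hd using fun i : ℕ => IsAlgClosed.exists_pow_nat_eq (k := k) (c (i + 1)) hq0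
    have h1 : g R = φ (∑ i ∈ range s, d i • g i) := by
      rw [← hφM', map_sum]
      rw [← hcsum, hsR, Finset.sum_range_succ' (fun i => c i • g i) s]
      simp only [h0, zero_smul, add_zero]
      refine Finset.sum_congr rfl fun i _ => ?_
      rw [hφM', hsmul, hd, ← hgsucc]
    have h2 : g s = ∑ i ∈ range s, d i • g i := by
      apply hbij.injective
      rw [← hgsucc, ← hsR, h1]
    have h3 : g s ∈ Submodule.span k (Set.range fun i : Fin s => g (i : ℕ)) := by
      rw [Submodule.mem_span_range_iff_exists_fun k]
      exact ⟨fun i => d i, by rw [Fin.sum_univ_eq_sum_range (fun i => d i • g i) s, ← h2]⟩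
    rw [hsR, hsnoc s, linearIndependent_fin_snoc] at hindepR
    exact hindepR.2 h3
  -- the polynomials p i
  set p : ℕ → k[X] := fun n =>
    Nat.rec (C (c 0) * X ^ q) (fun i pi => pi ^ q + C (c (i + 1)) * X ^ q) n with hp
  have hp0 : p 0 = C (c 0) * X ^ q := rfl
  have hpsucc : ∀ i, p (i + 1) = p i ^ q + C (c (i + 1)) * X ^ q := fun i => rfl
  have hpfacts : ∀ i, (X ^ q ∣ p i) ∧ p i ≠ 0 ∧ q ≤ (p i).natDegree := by
    intro i
    induction i with
    | zero =>
      refine ⟨dvd_mul_left _ _, mul_ne_zero (by simpa using hc0) (pow_ne_zero _ X_ne_zero), ?_⟩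
      rw [hp0, natDegree_C_mul_X_pow q (c 0) hc0]
    | succ i ih =>
      obtain ⟨hdvd, hne, hdeg⟩ := ih
      have hpow_ne : p i ^ q ≠ 0 := pow_ne_zero _ hne
      have hdeglt : (C (c (i + 1)) * X ^ q).degree < (p i ^ q).degree := by
        refine lt_of_le_of_lt (degree_C_mul_X_pow_le q _) ?_
        rw [degree_eq_natDegree hpow_ne, natDegree_pow]
        exact_mod_cast lt_of_lt_of_le (by nlinarith : q < q * q)
          (Nat.mul_le_mul_left q hdeg)
      have hdegeq : (p (i + 1)).degree = (p i ^ q).degree := by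
        rw [hpsucc]; exact degree_add_eq_left_of_degree_lt hdeglt
      refine ⟨?_, ?_, ?_⟩
      · rw [hpsucc]
        exact dvd_add (dvd_pow hdvd (by omega)) (dvd_mul_left _ _)
      · intro h
        rw [h, degree_zero] at hdegeq
        exact hpow_ne (degree_eq_bot.mp hdegeq.symm)
      · have := natDegree_eq_of_degree_eq hdegeq
        rw [this, natDegree_pow]
        nlinarith
  obtain ⟨Hp, hHp⟩ := (hpfacts s).1
  have hHpne : Hp ≠ 0 := by
    intro h; exact (hpfacts s).2.1 (by rw [hHp, h, mul_zero])
  -- find the root z₀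
  have hXq : (X : k[X]) ^ (q - 1) * Hp ≠ 0 := mul_ne_zero (pow_ne_zero _ X_ne_zero) hHpne
  have hdegQ : ((X : k[X]) ^ (q - 1) * Hp - 1).degree = ((X : k[X]) ^ (q - 1) * Hp).degree := by
    apply degree_sub_eq_left_of_degree_lt
    rw [degree_one, degree_eq_natDegree hXq]
    have : 0 < ((X : k[X]) ^ (q - 1) * Hp).natDegree := by
      rw [natDegree_mul (pow_ne_zero _ X_ne_zero) hHpne, natDegree_X_pow]
      omega
    exact_mod_cast this
  obtain ⟨z₀, hz₀⟩ : ∃ z₀, ((X : k[X]) ^ (q - 1) * Hp - 1).IsRoot z₀ := by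
    apply IsAlgClosed.exists_root
    rw [hdegQ, degree_eq_natDegree hXq]
    have : 0 < ((X : k[X]) ^ (q - 1) * Hp).natDegree := by
      rw [natDegree_mul (pow_ne_zero _ X_ne_zero) hHpne, natDegree_X_pow]; omega
    simp only [ne_eq, Nat.cast_eq_zero]
    exact_mod_cast this.ne'
  have hz₀eq : z₀ ^ (q - 1) * Hp.eval z₀ = 1 := by
    have := hz₀
    simp only [IsRoot, eval_sub, eval_mul, eval_pow, eval_X, eval_one, sub_eq_zero] at this
    exact this
  have hz₀ne : z₀ ≠ 0 := by
    intro h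
    rw [h, zero_pow (by omega : q - 1 ≠ 0), zero_mul] at hz₀eq
    exact zero_ne_one hz₀eq
  have hzq : z₀ ^ q = z₀ * z₀ ^ (q - 1) := by
    conv_lhs => rw [show q = (q - 1) + 1 by omega]
    rw [pow_succ]
    ring
  have hps : (p s).eval z₀ = z₀ := by
    rw [hHp, eval_mul, eval_pow, eval_X, hzq]
    rw [mul_assoc, hz₀eq, mul_one]
  set a : ℕ → k := fun i => (p i).eval z₀ with hadef
  have ha0 : a 0 = c 0 * z₀ ^ q := by simp [hadef, hp0]
  have hasucc : ∀ i, a (i + 1) = a i ^ q + c (i + 1) * z₀ ^ q := by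
    intro i; simp [hadef, hpsucc i]
  have has : a s = z₀ := hps
  refine ⟨∑ i ∈ range R, a i • g i, ?_, ?_⟩
  · intro h
    have := Fintype.linearIndependent_iff.mp hindepR (fun i : Fin R => a i)
      (by rw [Fin.sum_univ_eq_sum_range (fun i => a i • g i) R]; exact h) ⟨s, by omega⟩
    rw [has] at this
    exact hz₀ne this
  · rw [← hφM', map_sum]
    simp only [hφM', hsmul]
    have hstep : ∀ i, φ (g i) = g (i + 1) := fun i => (hgsucc i).symm
    calc ∑ i ∈ range R, a i ^ q • φ (g i)
        = ∑ i ∈ range R, a i ^ q • g (i + 1) := by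
          exact Finset.sum_congr rfl fun i _ => by rw [hstep]
      _ = ∑ i ∈ range s, a i ^ q • g (i + 1) + a s ^ q • g R := by
          rw [hsR, Finset.sum_range_succ (fun i => a i ^ q • g (i + 1)) s, ← hsR]
      _ = ∑ i ∈ range s, a i ^ q • g (i + 1) + ∑ j ∈ range R, (z₀ ^ q * c j) • g j := by
          rw [has, ← hcsum, Finset.smul_sum]
          simp only [smul_smul]
      _ = ∑ i ∈ range s, a i ^ q • g (i + 1) +
            (∑ j ∈ range s, (z₀ ^ q * c (j + 1)) • g (j + 1) + (z₀ ^ q * c 0) • g 0) := by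
          rw [hsR, Finset.sum_range_succ' (fun j => (z₀ ^ q * c j) • g j) s]
      _ = ∑ i ∈ range s, (a i ^ q + z₀ ^ q * c (i + 1)) • g (i + 1) + (z₀ ^ q * c 0) • g 0 := by
          rw [← add_assoc, ← Finset.sum_add_distrib]
          simp only [add_smul]
      _ = ∑ i ∈ range s, a (i + 1) • g (i + 1) + a 0 • g 0 := by
          congr 1
          · refine Finset.sum_congr rfl fun i _ => ?_
            rw [hasucc i, mul_comm (c (i+1)) (z₀ ^ q)]
          · rw [ha0, mul_comm]
      _ = ∑ i ∈ range R, a i • g i := by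
          rw [hsR, Finset.sum_range_succ' (fun i => a i • g i) s]

/-- A `q`-semilinear bijection of a f.d. vector space over an algebraically closed field
admits a spanning linearly independent family of fixed vectors. -/
lemma exists_fixed_basis_family (q : ℕ) (hq : 1 < q) :
    ∀ (n : ℕ) (V : Type) [AddCommGroup V] [Module k V] [FiniteDimensional k V],
      Module.finrank k V = n → ∀ (φ : V → V), (∀ u v, φ (u + v) = φ u + φ v) →
      (∀ (c : k) (v : V), φ (c • v) = c ^ q • φ v) → Function.Bijective φ →
      ∃ b : Fin n → V, LinearIndependent k b ∧ (∀ i, φ (b i) = b i) ∧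
        Submodule.span k (Set.range b) = ⊤ := by
  intro n
  induction n with
  | zero =>
    intro V _ _ _ hrank φ _ _ _
    have : Subsingleton V := Module.finrank_zero_iff.mp hrank
    refine ⟨Fin.elim0, linearIndependent_empty_type, fun i => i.elim0, ?_⟩
    refine eq_top_iff.mpr fun x _ => ?_
    rw [Subsingleton.elim x 0]
    exact Submodule.zero_mem _
  | succ n IH =>
    intro V _ _ _ hrank φ hadd hsmul hbij
    classical
    have hsub : ∀ x y : V, φ (x - y) = φ x - φ y := fun x y =>
      map_sub (AddMonoidHom.mk' φ hadd) x y
    have : Nontrivial V := by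
      apply Module.nontrivial_of_finrank_pos (R := k)
      omega
    obtain ⟨v, hv⟩ := exists_ne (0 : V)
    obtain ⟨w, hw0, hwfix⟩ := exists_fixed_vector q hq φ hadd hsmul hbij v hv
    set W : Submodule k V := Submodule.span k {w} with hW
    have hker : ∀ x ∈ W, φ x ∈ W := by
      intro x hx
      obtain ⟨cc, rfl⟩ := Submodule.mem_span_singleton.mp hx
      rw [hsmul, hwfix]
      exact Submodule.smul_mem _ _ (Submodule.mem_span_singleton_self w)
    -- the induced map on the quotient
    set φq : (V ⧸ W) → (V ⧸ W) := fun x => Submodule.Quotient.mk (φ x.out) with hφq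
    have hφq_mk : ∀ y : V, φq (Submodule.Quotient.mk y) = Submodule.Quotient.mk (φ y) := by
      intro y
      apply (Submodule.Quotient.eq W).mpr
      have h1 : ((Submodule.Quotient.mk y : V ⧸ W)).out - y ∈ W := by
        rw [← Submodule.Quotient.eq W]
        exact Quotient.out_eq' _
      have := hker _ h1
      rwa [hsub] at this
    have hqadd : ∀ x y : V ⧸ W, φq (x + y) = φq x + φq y := by
      intro x y
      obtain ⟨x, rfl⟩ := Submodule.Quotient.mk_surjective W x
      obtain ⟨y, rfl⟩ := Submodule.Quotient.mk_surjective W y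
      rw [← Submodule.Quotient.mk_add, hφq_mk, hφq_mk, hφq_mk, hadd, Submodule.Quotient.mk_add]
    have hqsmul : ∀ (c : k) (x : V ⧸ W), φq (c • x) = c ^ q • φq x := by
      intro c x
      obtain ⟨x, rfl⟩ := Submodule.Quotient.mk_surjective W x
      rw [← Submodule.Quotient.mk_smul, hφq_mk, hφq_mk, hsmul, Submodule.Quotient.mk_smul]
    have hqbij : Function.Bijective φq := by
      constructor
      · intro x y hxy
        obtain ⟨x, rfl⟩ := Submodule.Quotient.mk_surjective W x
        obtain ⟨y, rfl⟩ := Submodule.Quotient.mk_surjective W y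
        rw [hφq_mk, hφq_mk] at hxy
        have h1 : φ x - φ y ∈ W := (Submodule.Quotient.eq W).mp hxy
        rw [← hsub] at h1
        obtain ⟨cc, hcc⟩ := Submodule.mem_span_singleton.mp h1
        obtain ⟨dd, hdd⟩ := IsAlgClosed.exists_pow_nat_eq (k := k) cc (by omega : 0 < q)
        have h2 : φ (x - y) = φ (dd • w) := by
          rw [hsmul, hwfix, hdd, hcc]
        have h3 : x - y = dd • w := hbij.injective h2
        apply (Submodule.Quotient.eq W).mpr
        rw [h3]
        exact Submodule.smul_mem _ _ (Submodule.mem_span_singleton_self w)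
      · intro y
        obtain ⟨u, rfl⟩ := Submodule.Quotient.mk_surjective W y
        obtain ⟨t, rfl⟩ := hbij.surjective u
        exact ⟨Submodule.Quotient.mk t, hφq_mk t⟩
    have hrankq : Module.finrank k (V ⧸ W) = n := by
      have h1 := Submodule.finrank_quotient_add_finrank W
      rw [finrank_span_singleton hw0] at h1
      omega
    obtain ⟨bq, hbqind, hbqfix, hbqspan⟩ :=
      IH (V ⧸ W) hrankq φq hqadd hqsmul hqbij
    -- lift the basis of the quotient
    choose u hu using fun i => Submodule.Quotient.mk_surjective W (bq i)
    have hdefect : ∀ i, φ (u i) - u i ∈ W := by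
      intro i
      rw [← Submodule.Quotient.eq W]
      have h := hbqfix i
      rw [← hu i, hφq_mk] at h
      rw [h, hu i]
    choose cc hcc using fun i => Submodule.mem_span_singleton.mp (hdefect i)
    -- Artin–Schreier corrections
    have hAS : ∀ i : Fin n, ∃ t : k, t ^ q + cc i = t := by
      intro i
      obtain ⟨t, ht⟩ : ∃ t, ((X : Polynomial k) ^ q - (X - Polynomial.C (cc i))).IsRoot t := by
        apply IsAlgClosed.exists_root
        rw [Polynomial.degree_sub_eq_left_of_degree_lt, Polynomial.degree_X_pow]
        · exact_mod_cast (by omega : q ≠ 0)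
        · rw [Polynomial.degree_X_pow]
          refine lt_of_le_of_lt (Polynomial.degree_sub_le _ _) ?_
          simp only [Polynomial.degree_X]
          refine max_lt ?_ ?_
          · exact_mod_cast (by omega : 1 < q)
          · exact lt_of_le_of_lt Polynomial.degree_C_le (by exact_mod_cast (by omega : 0 < q))
      refine ⟨t, ?_⟩
      simp only [Polynomial.IsRoot, Polynomial.eval_sub, Polynomial.eval_pow, Polynomial.eval_X,
        Polynomial.eval_C, sub_eq_zero] at ht
      rw [ht]
      ring
    choose t ht using hAS
    set bv : Fin n → V := fun i => u i + t i • w with hbv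
    have hbvfix : ∀ i, φ (bv i) = bv i := by
      intro i
      have h1 : φ (u i) = u i + cc i • w := by
        rw [hcc i]
        abel
      show φ (u i + t i • w) = u i + t i • w
      rw [hadd, hsmul, hwfix, h1, add_assoc, ← add_smul]
      rw [add_comm (cc i) (t i ^ q), ht i]
    have hbvmk : ∀ i, Submodule.Quotient.mk (bv i) = bq i := by
      intro i
      show Submodule.Quotient.mk (u i + t i • w) = bq i
      rw [Submodule.Quotient.mk_add, Submodule.Quotient.mk_smul]
      rw [(Submodule.Quotient.mk_eq_zero W).mpr (Submodule.mem_span_singleton_self w)]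
      rw [smul_zero, add_zero, hu]
    refine ⟨Fin.cons w bv, ?_, ?_, ?_⟩
    · rw [Fintype.linearIndependent_iff]
      intro C hC
      have hC2 : ∑ i : Fin n, C i.succ • bq i = 0 := by
        have h2 := congrArg W.mkQ hC
        rw [map_zero, map_sum] at h2
        rw [Fin.sum_univ_succ] at h2
        simp only [Fin.cons_zero, Fin.cons_succ, map_smul, Submodule.mkQ_apply] at h2
        rw [(Submodule.Quotient.mk_eq_zero W).mpr (Submodule.mem_span_singleton_self w),
          smul_zero, zero_add] at h2
        rw [← h2]
        exact Finset.sum_congr rfl fun i _ => by rw [hbvmk]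
      have hCsucc := Fintype.linearIndependent_iff.mp hbqind (fun i => C i.succ) hC2
      have hC0 : C 0 • w = 0 := by
        rw [Fin.sum_univ_succ] at hC
        simp only [Fin.cons_zero, Fin.cons_succ] at hC
        have : ∑ i : Fin n, C i.succ • bv i = 0 := by
          refine Finset.sum_eq_zero fun i _ => ?_
          rw [show C i.succ = 0 from hCsucc i, zero_smul]
        rw [this, add_zero] at hC
        exact hC
      intro i
      refine Fin.cases ?_ ?_ i
      · rcases smul_eq_zero.mp hC0 with h | h
        · exact h
        · exact absurd h hw0
      · exact hCsucc
    · intro i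
      refine Fin.cases ?_ ?_ i
      · simpa using hwfix
      · intro j
        simpa using hbvfix j
    · refine eq_top_iff.mpr fun x _ => ?_
      have hx : (Submodule.Quotient.mk x : V ⧸ W) ∈ Submodule.span k (Set.range bq) := by
        rw [hbqspan]; trivial
      obtain ⟨e, he⟩ := (Submodule.mem_span_range_iff_exists_fun k).mp hx
      have h1 : (Submodule.Quotient.mk (∑ i : Fin n, e i • bv i) : V ⧸ W) =
          Submodule.Quotient.mk x := by
        rw [← he, ← Submodule.mkQ_apply, map_sum]
        refine Finset.sum_congr rfl fun i _ => ?_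
        rw [map_smul, Submodule.mkQ_apply, hbvmk]
      obtain ⟨dd, hdd⟩ := Submodule.mem_span_singleton.mp
        ((Submodule.Quotient.eq W).mp h1.symm)
      have hxeq : x = dd • w + ∑ i : Fin n, e i • bv i := by
        rw [hdd]; abel
      rw [hxeq]
      refine Submodule.add_mem _ ?_ ?_
      · exact Submodule.smul_mem _ _ (Submodule.subset_span ⟨0, Fin.cons_zero _ _⟩)
      · refine Submodule.sum_mem _ fun i _ => Submodule.smul_mem _ _ ?_
        exact Submodule.subset_span ⟨i.succ, by simp⟩


lemma ringAut_pow_apply {k : Type} [CommSemiring k] (σ : RingAut k) (ℓ : ℕ)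
    (hσ : ∀ x : k, σ x = x ^ ℓ) : ∀ (n : ℕ) (x : k), (σ ^ n) x = x ^ ℓ ^ n := by
  intro n
  induction n with
  | zero => intro x; rw [pow_zero, pow_zero, pow_one]; rfl
  | succ n ih =>
    intro x
    have h1 : (σ ^ (n + 1)) x = (σ ^ n) (σ x) := by
      rw [pow_succ]
      rfl
    rw [h1, hσ, ih, ← pow_mul, pow_succ']

lemma mem_range_algebraMap_of_pow_eq (ℓ : ℕ) [Fact ℓ.Prime] (m : ℕ) (hm : 0 < m)
    {k : Type} [Field k] [Algebra (GaloisField ℓ m) k]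
    (x : k) (hx : x ^ ℓ ^ m = x) : ∃ c : GaloisField ℓ m, algebraMap (GaloisField ℓ m) k c = x := by
  classical
  letI : Fintype (GaloisField ℓ m) := Fintype.ofFinite _
  have hcard : Fintype.card (GaloisField ℓ m) = ℓ ^ m := by
    rw [← Nat.card_eq_fintype_card]
    exact GaloisField.card ℓ m hm.ne'
  set q : ℕ := ℓ ^ m with hqdef
  have hq : 1 < q := Nat.one_lt_pow hm.ne' (Fact.out (p := ℓ.Prime)).one_lt
  set f : Polynomial k := Polynomial.X ^ q - Polynomial.X with hf
  have hdegf : f.degree = q := by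
    rw [hf, Polynomial.degree_sub_eq_left_of_degree_lt, Polynomial.degree_X_pow]
    rw [Polynomial.degree_X_pow, Polynomial.degree_X]
    exact_mod_cast hq
  have hfne : f ≠ 0 := fun h => by
    rw [h, Polynomial.degree_zero] at hdegf
    exact absurd hdegf.symm (by simp)
  have hndegf : f.natDegree = q := Polynomial.natDegree_eq_of_degree_eq_some hdegf
  set S : Finset k := Finset.image (algebraMap (GaloisField ℓ m) k) Finset.univ with hS
  have hcardS : S.card = q := by
    rw [hS, Finset.card_image_of_injective _ (algebraMap (GaloisField ℓ m) k).injective,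
      Finset.card_univ, hcard]
  set T : Finset k := f.roots.toFinset with hT
  have hST : S ⊆ T := by
    intro y hy
    obtain ⟨c, _, rfl⟩ := Finset.mem_image.mp hy
    rw [hT, Multiset.mem_toFinset, Polynomial.mem_roots hfne]
    have : c ^ q = c := by
      rw [← hcard]
      exact FiniteField.pow_card c
    simp only [Polynomial.IsRoot, hf, Polynomial.eval_sub, Polynomial.eval_pow,
      Polynomial.eval_X, sub_eq_zero, ← map_pow, this]
  have hcardT : T.card ≤ q := by
    refine le_trans (Multiset.toFinset_card_le _) ?_
    rw [← hndegf]
    exact f.card_roots'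
  have hSeqT : S = T := Finset.eq_of_subset_of_card_le hST (by omega)
  have hxT : x ∈ T := by
    rw [hT, Multiset.mem_toFinset, Polynomial.mem_roots hfne]
    simp only [Polynomial.IsRoot, hf, Polynomial.eval_sub, Polynomial.eval_pow,
      Polynomial.eval_X, sub_eq_zero]
    exact hx
  rw [← hSeqT] at hxT
  obtain ⟨c, _, hc⟩ := Finset.mem_image.mp hxT
  exact ⟨c, hc⟩

open TensorProduct

/-- The twist of a `k`-algebra by a ring automorphism `τ` of `k`: the same ring, with scalar
multiplication `λ · a = τ⁻¹(λ) a`. -/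
def AlgTwist {k : Type*} [CommRing k] (τ : k ≃+* k) (A : Type*) : Type _ := A

instance {k : Type*} [CommRing k] (τ : k ≃+* k) (A : Type*) [Ring A] :
    Ring (AlgTwist τ A) := ‹Ring A›

noncomputable instance {k : Type*} [CommRing k] (τ : k ≃+* k) (A : Type*) [Ring A]
    [Algebra k A] : Algebra k (AlgTwist τ A) :=
  RingHom.toAlgebra' ((algebraMap k A).comp τ.symm.toRingHom)
    (fun c x => Algebra.commutes (A := A) (τ.symm c) x)

/-- A finite dimensional algebra `A` over `k = F̄_ℓ` is defined over `F_{ℓ^m}`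
if and only if `A ≅ A^{σ^m}` as `k`-algebras, `σ` being the Frobenius `λ ↦ λ^ℓ`. -/
theorem stmt_9 (ℓ : ℕ) [Fact ℓ.Prime] (k : Type) [Field k] [IsAlgClosed k] [CharP k ℓ]
    (σ : RingAut k) (hσ : ∀ x : k, σ x = x ^ ℓ)
    (m : ℕ) (hm : 0 < m) [Algebra (GaloisField ℓ m) k]
    (A : Type) [Ring A] [Algebra k A] [FiniteDimensional k A] :
    (∃ (A₀ : Type) (_ : Ring A₀) (_ : Algebra (GaloisField ℓ m) A₀),
        Nonempty (A ≃ₐ[k] (k ⊗[GaloisField ℓ m] A₀))) ↔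
      Nonempty (A ≃ₐ[k] AlgTwist (σ ^ m) A) := by
  classical
  set τ : RingAut k := σ ^ m with hτdef
  set q : ℕ := ℓ ^ m with hqdef
  have hℓ : 1 < ℓ := (Fact.out (p := ℓ.Prime)).one_lt
  have hq1 : 1 < q := Nat.one_lt_pow hm.ne' hℓ
  have hτ : ∀ x : k, τ x = x ^ q := fun x => ringAut_pow_apply σ ℓ hσ m x
  letI : Fintype (GaloisField ℓ m) := Fintype.ofFinite _
  have hcard : Fintype.card (GaloisField ℓ m) = q := by
    rw [← Nat.card_eq_fintype_card]
    exact GaloisField.card ℓ m hm.ne'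
  have hfix : ∀ c : GaloisField ℓ m,
      τ (algebraMap (GaloisField ℓ m) k c) = algebraMap (GaloisField ℓ m) k c := by
    intro c
    rw [hτ, ← map_pow]
    congr 1
    rw [← hcard]
    exact FiniteField.pow_card c
  have halgtw : ∀ c : k, algebraMap k (AlgTwist τ A) c = algebraMap k A (τ.symm c) := fun _ => rfl
  have htsmul : ∀ (c : k) (x : A), (c • (show AlgTwist τ A from x) : AlgTwist τ A) = ((τ.symm c) • x : A) := by
    intro c x
    have h1 : (c • (show AlgTwist τ A from x) : AlgTwist τ A) =
        algebraMap k (AlgTwist τ A) c * (show AlgTwist τ A from x) :=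
      Algebra.smul_def c _
    rw [h1, halgtw]
    exact (Algebra.smul_def _ x).symm
  constructor
  · rintro ⟨A₀, iR, iA, ⟨ρ⟩⟩
    have hfix' : ∀ c : GaloisField ℓ m,
        τ.symm (algebraMap (GaloisField ℓ m) k c) = algebraMap (GaloisField ℓ m) k c := by
      intro c
      conv_lhs => rw [← hfix c]
      exact τ.symm_apply_apply _
    let e : k ≃ₐ[GaloisField ℓ m] k := AlgEquiv.ofRingEquiv (f := (τ.symm : k ≃+* k)) hfix'
    let Θ := Algebra.TensorProduct.congr e (AlgEquiv.refl (R := GaloisField ℓ m) (A₁ := A₀))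
    let RE : A ≃+* A := ρ.toRingEquiv.trans (Θ.toRingEquiv.trans ρ.symm.toRingEquiv)
    refine ⟨AlgEquiv.ofRingEquiv (f := (RE : A ≃+* AlgTwist τ A)) ?_⟩
    intro c
    rw [halgtw]
    show ρ.symm (Θ (ρ (algebraMap k A c))) = algebraMap k A (τ.symm c)
    rw [AlgEquiv.commutes ρ c]
    have h1 : algebraMap k (k ⊗[GaloisField ℓ m] A₀) c = c ⊗ₜ[GaloisField ℓ m] 1 := by
      rw [Algebra.TensorProduct.algebraMap_apply]
      simp
    rw [h1]
    have h2 : Θ (c ⊗ₜ[GaloisField ℓ m] 1) = (τ.symm c) ⊗ₜ[GaloisField ℓ m] 1 := by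
      show (Algebra.TensorProduct.congr e (AlgEquiv.refl)) (c ⊗ₜ 1) = _
      rw [Algebra.TensorProduct.congr_apply, Algebra.TensorProduct.map_tmul]
      rfl
    rw [h2]
    have h3 : (τ.symm c) ⊗ₜ[GaloisField ℓ m] (1 : A₀) =
        algebraMap k (k ⊗[GaloisField ℓ m] A₀) (τ.symm c) := by
      rw [Algebra.TensorProduct.algebraMap_apply]
      simp
    rw [h3, ← AlgEquiv.commutes ρ (τ.symm c), AlgEquiv.symm_apply_apply]
  · rintro ⟨e⟩
    -- φ = e.symm is a q-semilinear ring automorphism of A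
    set φ : A → A := fun a => e.symm (show AlgTwist τ A from a) with hφdef
    have hadd : ∀ u v : A, φ (u + v) = φ u + φ v := fun u v => map_add e.symm _ _
    have hmul : ∀ u v : A, φ (u * v) = φ u * φ v := fun u v => map_mul e.symm _ _
    have hone : φ 1 = 1 := map_one e.symm
    have hbij : Function.Bijective φ := e.symm.bijective
    have hsmul : ∀ (c : k) (x : A), φ (c • x) = c ^ q • φ x := by
      intro c x
      have h1 : (c • x : A) = ((τ c) • (show AlgTwist τ A from x) : AlgTwist τ A) := by
        rw [htsmul, τ.symm_apply_apply]
      rw [hφdef]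
      simp only
      rw [h1]
      have h2 : e.symm ((τ c) • (show AlgTwist τ A from x)) = (τ c) • e.symm (show AlgTwist τ A from x) :=
        map_smul e.symm.toLinearMap (τ c) (show AlgTwist τ A from x)
      rw [h2, hτ]
    -- the fixed subring
    let B : Subring A :=
      { carrier := {a : A | φ a = a}
        mul_mem' := fun {a b} ha hb => by
          simp only [Set.mem_setOf_eq] at *
          rw [hmul, ha, hb]
        one_mem' := hone
        add_mem' := fun {a b} ha hb => by
          simp only [Set.mem_setOf_eq] at *
          rw [hadd, ha, hb]
        zero_mem' := by
          have : φ 0 = 0 := map_zero e.symm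
          exact this
        neg_mem' := fun {a} ha => by
          simp only [Set.mem_setOf_eq] at *
          have : φ (-a) = -φ a := map_neg e.symm _
          rw [this, ha] }
    -- scalars
    let j : GaloisField ℓ m →+* A := (algebraMap k A).comp (algebraMap (GaloisField ℓ m) k)
    letI instFA : Algebra (GaloisField ℓ m) A :=
      j.toAlgebra' (fun c x => Algebra.commutes (algebraMap (GaloisField ℓ m) k c) x)
    letI instTower : IsScalarTower (GaloisField ℓ m) k A :=
      IsScalarTower.of_algebraMap_eq (fun _ => rfl)
    have hjmem : ∀ c : GaloisField ℓ m, j c ∈ B := by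
      intro c
      show φ (j c) = j c
      have h1 : j c = (algebraMap (GaloisField ℓ m) k c) • (1 : A) := by
        rw [Algebra.smul_def, mul_one]
        rfl
      rw [h1, hsmul, hone]
      congr 1
      rw [← hτ, hfix]
    let jB : GaloisField ℓ m →+* B := j.codRestrict B hjmem
    letI instFB : Algebra (GaloisField ℓ m) B :=
      jB.toAlgebra' (fun c x => by
        apply Subtype.ext
        exact Algebra.commutes (algebraMap (GaloisField ℓ m) k c) (x : A))
    letI instTowerB : IsScalarTower (GaloisField ℓ m) k k := inferInstance
    let gB : B →ₐ[GaloisField ℓ m] A :=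
      { toRingHom := B.subtype
        commutes' := fun _ => rfl }
    -- a basis of fixed vectors
    obtain ⟨b, hbind, hbfix, hbspan⟩ := exists_fixed_basis_family q hq1 (Module.finrank k A) A
      rfl φ hadd hsmul hbij
    let bA : Module.Basis (Fin (Module.finrank k A)) k A := Module.Basis.mk hbind (le_of_eq hbspan.symm)
    have hbA : ∀ i, bA i = b i := fun i => Module.Basis.mk_apply _ _ _
    let bfam : Fin (Module.finrank k A) → B := fun i => ⟨b i, hbfix i⟩
    -- independence over the finite field
    have hsmulFk : Function.Injective fun r : GaloisField ℓ m => r • (1 : k) := by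
      have : (fun r : GaloisField ℓ m => r • (1 : k)) = fun r => algebraMap (GaloisField ℓ m) k r := by
        funext r
        rw [Algebra.smul_def, mul_one]
      rw [this]
      exact (algebraMap (GaloisField ℓ m) k).injective
    have hbindF : LinearIndependent (GaloisField ℓ m) b := hbind.restrict_scalars hsmulFk
    have hbfamind : LinearIndependent (GaloisField ℓ m) bfam := by
      apply LinearIndependent.of_comp gB.toLinearMap
      have : (⇑gB.toLinearMap ∘ bfam) = b := funext fun i => rfl
      rw [this]
      exact hbindF
    -- spanning over the finite field
    have hsmulB : ∀ (μ : GaloisField ℓ m) (y : B),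
        ((μ • y : B) : A) = (algebraMap (GaloisField ℓ m) k μ) • (y : A) := by
      intro μ y
      have h1 : (μ • y : B) = jB μ * y := Algebra.smul_def μ y
      have h2 : ((jB μ * y : B) : A) = j μ * (y : A) := rfl
      rw [h1, h2, Algebra.smul_def]
      rfl
    have hbfamspan : ⊤ ≤ Submodule.span (GaloisField ℓ m) (Set.range bfam) := by
      intro x _
      have hrepr : ∑ i, bA.repr (x : A) i • bA i = (x : A) := Module.Basis.sum_repr bA (x : A)
      have hfixx : φ (x : A) = (x : A) := x.2
      have hfixcoef : ∀ i, bA.repr (x : A) i ^ q = bA.repr (x : A) i := by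
        have h1 : φ (x : A) = ∑ i, (bA.repr (x : A) i ^ q) • b i := by
          conv_lhs => rw [← hrepr]
          rw [show φ (∑ i, bA.repr (x : A) i • bA i) =
              ∑ i, φ (bA.repr (x : A) i • bA i) from
            map_sum (AddMonoidHom.mk' φ hadd) _ _]
          refine Finset.sum_congr rfl fun i _ => ?_
          rw [hsmul, hbA, hbfix]
        have h2 : ∑ i, (bA.repr (x : A) i ^ q) • b i = ∑ i, bA.repr (x : A) i • b i := by
          rw [← h1, hfixx]
          conv_lhs => rw [← hrepr]
          exact Finset.sum_congr rfl fun i _ => by rw [hbA]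
        have h3 : ∑ i, (bA.repr (x : A) i ^ q - bA.repr (x : A) i) • b i = 0 := by
          simp only [sub_smul]
          rw [Finset.sum_sub_distrib, h2, sub_self]
        intro i
        have := Fintype.linearIndependent_iff.mp hbind _ h3 i
        have h4 : bA.repr (x : A) i ^ q - bA.repr (x : A) i = 0 := this
        linear_combination h4
      have hexists : ∀ i, ∃ μ : GaloisField ℓ m,
          algebraMap (GaloisField ℓ m) k μ = bA.repr (x : A) i := fun i =>
        mem_range_algebraMap_of_pow_eq ℓ m hm _ (by rw [← hqdef]; exact hfixcoef i)
      choose μ hμ using hexists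
      rw [Submodule.mem_span_range_iff_exists_fun]
      refine ⟨μ, ?_⟩
      apply Subtype.ext
      calc ((∑ i, μ i • bfam i : B) : A)
          = ∑ i, ((μ i • bfam i : B) : A) := map_sum B.subtype _ _
        _ = ∑ i, (algebraMap (GaloisField ℓ m) k (μ i)) • (b i) := by
            exact Finset.sum_congr rfl fun i _ => by rw [hsmulB]
        _ = ∑ i, bA.repr (x : A) i • bA i := by
            exact Finset.sum_congr rfl fun i _ => by rw [hμ, hbA]
        _ = (x : A) := hrepr
    let bB : Module.Basis (Fin (Module.finrank k A)) (GaloisField ℓ m) B := Module.Basis.mk hbfamind hbfamspan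
    -- the algebra map  k ⊗ B → A
    let Φ : (k ⊗[GaloisField ℓ m] B) →ₐ[k] A :=
      Algebra.TensorProduct.lift (Algebra.ofId k A) gB
        (fun x y => (Algebra.commutes x (gB y) : _))
    let TB : Module.Basis (Fin (Module.finrank k A)) k (k ⊗[GaloisField ℓ m] B) :=
      Algebra.TensorProduct.basis k bB
    let LE : (k ⊗[GaloisField ℓ m] B) ≃ₗ[k] A := TB.equiv bA (Equiv.refl _)
    have hΦeq : Φ.toLinearMap = (LE : (k ⊗[GaloisField ℓ m] B) →ₗ[k] A) := by
      apply TB.ext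
      intro i
      have h1 : TB i = 1 ⊗ₜ[GaloisField ℓ m] bB i := Algebra.TensorProduct.basis_apply bB i
      have h2 : Φ.toLinearMap (TB i) = b i := by
        rw [h1]
        show Φ (1 ⊗ₜ[GaloisField ℓ m] bB i) = b i
        rw [show Φ (1 ⊗ₜ[GaloisField ℓ m] bB i) = (Algebra.ofId k A) 1 * gB (bB i) from
          Algebra.TensorProduct.lift_tmul _ _ _ _ _]
        have h3 : bB i = bfam i := Module.Basis.mk_apply _ _ _
        rw [h3]
        show algebraMap k A 1 * (b i) = b i
        rw [map_one, one_mul]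
      rw [h2]
      show b i = LE (TB i)
      rw [show LE (TB i) = bA (Equiv.refl _ i) from TB.equiv_apply i bA (Equiv.refl _), hbA]
      rfl
    have hΦbij : Function.Bijective Φ := by
      have hcoe : ⇑Φ = ⇑LE := by
        have : ⇑Φ.toLinearMap = ⇑(LE : (k ⊗[GaloisField ℓ m] B) →ₗ[k] A) := by rw [hΦeq]
        exact this
      rw [hcoe]
      exact LE.bijective
    exact ⟨B, inferInstance, instFB, ⟨(AlgEquiv.ofBijective Φ hΦbij).symm⟩⟩
end

section
/- Let K be the fraction field of an absolutely unramified complete discrete valuation ring O with residue field the algebraic closure of F_ℓ, let σ̂ be the automorphism of K lifting the Frobenius of the residue field, and let K̄ be an algebraic closure of K. Then there exists a field automorphism τ : K̄ → K̄ extending σ̂ such that τ(ζ) = ζ for every root of unity ζ in K̄ of ℓ-power order. -/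
open Polynomial IntermediateField

/-- A compatible tower of primitive `ℓ ^ n`-th roots of unity in an algebraically closed
field of characteristic zero. -/
lemma exists_zeta_tower (F : Type) [Field F] [IsAlgClosed F] [CharZero F]
    {ℓ : ℕ} (hℓ : ℓ.Prime) :
    ∃ ζ : ℕ → F, (∀ n, IsPrimitiveRoot (ζ n) (ℓ ^ n)) ∧ ∀ n, ζ (n + 1) ^ ℓ = ζ n := by
  haveI : Fact ℓ.Prime := ⟨hℓ⟩
  have hprim : ∀ m : ℕ, m ≠ 0 → ∃ z : F, IsPrimitiveRoot z m := by
    intro m hm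
    haveI : NeZero ((m : ℕ) : F) := ⟨Nat.cast_ne_zero.mpr hm⟩
    obtain ⟨z, hz⟩ := IsAlgClosed.exists_root (cyclotomic m F)
      (degree_cyclotomic_pos m F (Nat.pos_of_ne_zero hm)).ne'
    exact ⟨z, isRoot_cyclotomic_iff.mp hz⟩
  have step : ∀ n : ℕ, ∀ z : F, IsPrimitiveRoot z (ℓ ^ n) →
      ∃ y : F, y ^ ℓ = z ∧ IsPrimitiveRoot y (ℓ ^ (n + 1)) := by
    intro n z hz
    obtain ⟨w, hw⟩ := hprim (ℓ ^ (n + 1)) (pow_ne_zero _ hℓ.ne_zero)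
    rcases Nat.eq_zero_or_pos n with rfl | hn
    · have hz1 : z = 1 := by
        rw [pow_zero] at hz
        exact IsPrimitiveRoot.one_right_iff.mp hz
      refine ⟨w, ?_, hw⟩
      rw [hz1]
      have := hw.pow_eq_one
      rwa [zero_add, pow_one] at this
    · have hwl : IsPrimitiveRoot (w ^ ℓ) (ℓ ^ n) :=
        hw.pow (Nat.pos_of_ne_zero (pow_ne_zero _ hℓ.ne_zero)) (by rw [pow_succ'])
      haveI : NeZero (ℓ ^ n) := ⟨pow_ne_zero _ hℓ.ne_zero⟩
      obtain ⟨i, -, hi⟩ := hwl.eq_pow_of_pow_eq_one hz.pow_eq_one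
      have hcop : i.Coprime (ℓ ^ n) :=
        ((hwl.pow_iff_coprime (Nat.pos_of_ne_zero (pow_ne_zero _ hℓ.ne_zero)) i).mp
          (hi ▸ hz))
      have hcopl : i.Coprime ℓ :=
        Nat.Coprime.coprime_dvd_right (dvd_pow_self ℓ hn.ne') hcop
      refine ⟨w ^ i, ?_, hw.pow_of_coprime i (hcopl.pow_right _)⟩
      rw [← pow_mul, mul_comm, pow_mul, hi]
  let T : ∀ n : ℕ, {z : F // IsPrimitiveRoot z (ℓ ^ n)} := fun n =>
    Nat.rec (motive := fun n => {z : F // IsPrimitiveRoot z (ℓ ^ n)})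
      ⟨1, by rw [pow_zero]; exact IsPrimitiveRoot.one⟩
      (fun n p => ⟨Classical.choose (step n p.1 p.2),
        (Classical.choose_spec (step n p.1 p.2)).2⟩) n
  exact ⟨fun n => (T n).1, fun n => (T n).2,
    fun n => (Classical.choose_spec (step n (T n).1 (T n).2)).1⟩

/-- Given a tower of primitive `ℓ^n`-th roots of unity `ζ` in an algebraic extension `Kb` of `K`
on which all the cyclotomic polynomials `Φ_{ℓ^n}` are irreducible, any embedding `j` of `K` into
an algebraically closed field `M` of characteristic zero extends to an embedding `φ` of `Kb`
sending `ζ n` to any prescribed compatible tower `ξ` of primitive roots in `M`. -/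
lemma keyB {K Kb M : Type} [Field K] [CharZero K] [Field Kb] [Algebra K Kb]
    [Algebra.IsAlgebraic K Kb] [Field M] [IsAlgClosed M]
    {ℓ : ℕ} (hℓ : ℓ.Prime)
    (hirr : ∀ n : ℕ, Irreducible (Polynomial.cyclotomic (ℓ ^ n) K))
    (j : K →+* M)
    (ζ : ℕ → Kb) (hζ : ∀ n, IsPrimitiveRoot (ζ n) (ℓ ^ n))
    (hζc : ∀ n, ζ (n + 1) ^ ℓ = ζ n)
    (ξ : ℕ → M) (hξ : ∀ n, IsPrimitiveRoot (ξ n) (ℓ ^ n))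
    (hξc : ∀ n, ξ (n + 1) ^ ℓ = ξ n) :
    ∃ φ : Kb →+* M, (∀ x : K, φ (algebraMap K Kb x) = j x) ∧ ∀ n, φ (ζ n) = ξ n := by
  classical
  letI : Algebra K M := j.toAlgebra
  haveI : CharZero M :=
    charZero_of_injective_algebraMap (show Function.Injective (algebraMap K M) from j.injective)
  -- power compatibility
  have hpowζ : ∀ i k, ζ (i + k) ^ ℓ ^ k = ζ i := by
    intro i k
    induction k with
    | zero => simp
    | succ k ih => rw [pow_succ', pow_mul, ← Nat.add_assoc, hζc, ih]
  have hpowξ : ∀ i k, ξ (i + k) ^ ℓ ^ k = ξ i := by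
    intro i k
    induction k with
    | zero => simp
    | succ k ih => rw [pow_succ', pow_mul, ← Nat.add_assoc, hξc, ih]
  have hζsub : ∀ i m, i ≤ m → ζ m ^ ℓ ^ (m - i) = ζ i := by
    intro i m him
    have := hpowζ i (m - i)
    rwa [Nat.add_sub_cancel' him] at this
  have hξsub : ∀ i m, i ≤ m → ξ m ^ ℓ ^ (m - i) = ξ i := by
    intro i m him
    have := hpowξ i (m - i)
    rwa [Nat.add_sub_cancel' him] at this
  -- minimal polynomials
  have hint : ∀ n, IsIntegral K (ζ n) := fun n =>
    (Algebra.IsAlgebraic.isAlgebraic (ζ n)).isIntegral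
  have hmin : ∀ n, minpoly K (ζ n) = cyclotomic (ℓ ^ n) K := by
    intro n
    haveI : NeZero ((ℓ ^ n : ℕ) : K) := ⟨Nat.cast_ne_zero.mpr (pow_ne_zero _ hℓ.ne_zero)⟩
    exact ((hζ n).minpoly_eq_cyclotomic_of_irreducible (hirr n)).symm
  have hroot : ∀ n, (Polynomial.aeval (ξ n)) (minpoly K (ζ n)) = 0 := by
    intro n
    haveI : NeZero ((ℓ ^ n : ℕ) : M) := ⟨Nat.cast_ne_zero.mpr (pow_ne_zero _ hℓ.ne_zero)⟩
    rw [hmin n, aeval_def, eval₂_eq_eval_map, map_cyclotomic]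
    exact isRoot_cyclotomic_iff.mpr (hξ n)
  -- the chain of intermediate fields
  let E : ℕ → IntermediateField K Kb := fun n => K⟮ζ n⟯
  have hgen : ∀ n, ζ n ∈ E n := fun n => mem_adjoin_simple_self K (ζ n)
  have hmono : ∀ i m, i ≤ m → E i ≤ E m := by
    intro i m him
    rw [show E i = K⟮ζ i⟯ from rfl, adjoin_simple_le_iff, ← hζsub i m him]
    exact pow_mem (hgen m) _
  -- the partial embeddings
  let pb : ∀ n, PowerBasis K (E n) := fun n => adjoin.powerBasis (hint n)
  have hpbroot : ∀ n, (Polynomial.aeval (ξ n)) (minpoly K (pb n).gen) = 0 := by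
    intro n
    rw [show (pb n).gen = AdjoinSimple.gen K (ζ n) from adjoin.powerBasis_gen (hint n),
      minpoly_gen K (ζ n)]
    exact hroot n
  let f : ∀ n, E n →ₐ[K] M := fun n => (pb n).lift (ξ n) (hpbroot n)
  have hfgen : ∀ n, f n ⟨ζ n, hgen n⟩ = ξ n := fun n => (pb n).lift_gen (ξ n) (hpbroot n)
  have hfpow : ∀ i m (him : i ≤ m) (h2 : ζ i ∈ E m), f m ⟨ζ i, h2⟩ = ξ i := by
    intro i m him h2
    have e1 : (⟨ζ i, h2⟩ : E m) = (⟨ζ m, hgen m⟩ : E m) ^ ℓ ^ (m - i) := by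
      ext
      simp only [SubmonoidClass.coe_pow]
      exact (hζsub i m him).symm
    rw [e1, map_pow, hfgen m, hξsub i m him]
  have hfI : ∀ a b (hab : a ≤ b), f a = (f b).comp (IntermediateField.inclusion (hmono a b hab)) := by
    intro a b hab
    refine algHom_ext_of_eq_adjoin K (rfl : E a = adjoin K {ζ a}) ?_
    intro y hy
    obtain rfl : y = ζ a := hy
    rw [AlgHom.comp_apply]
    have h3 : (IntermediateField.inclusion (hmono a b hab))
        ⟨ζ a, hgen a⟩ = ⟨ζ a, hmono a b hab (hgen a)⟩ := Subtype.ext rfl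
    rw [h3]
    have h4 : f a ⟨ζ a, hgen a⟩ = ξ a := hfgen a
    rw [h4, hfpow a b hab (hmono a b hab (hgen a))]
  have hext : ∀ a b (hab : a ≤ b) (x : Kb) (hxa : x ∈ E a) (hxb : x ∈ E b),
      f a ⟨x, hxa⟩ = f b ⟨x, hxb⟩ := by
    intro a b hab x hxa hxb
    rw [hfI a b hab, AlgHom.comp_apply]
    have h5 : (IntermediateField.inclusion (hmono a b hab)) ⟨x, hxa⟩ = ⟨x, hxb⟩ :=
      Subtype.ext rfl
    rw [h5]
  have hval : ∀ i m (h2 : ζ i ∈ E m), f m ⟨ζ i, h2⟩ = ξ i := by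
    intro i m h2
    have h3 : ζ i ∈ E (max i m) := hmono i _ (le_max_left _ _) (hgen i)
    calc f m ⟨ζ i, h2⟩ = f (max i m) ⟨ζ i, h3⟩ := hext m _ (le_max_right _ _) _ h2 h3
      _ = ξ i := hfpow i _ (le_max_left _ _) h3
  have hfI' : ∀ a b (hEm : E a ≤ E b), f a = (f b).comp (IntermediateField.inclusion hEm) := by
    intro a b hEm
    rcases le_total a b with hab | hba
    · exact hfI a b hab
    · refine algHom_ext_of_eq_adjoin K (rfl : E a = adjoin K {ζ a}) ?_
      intro y hy
      obtain rfl : y = ζ a := hy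
      rw [AlgHom.comp_apply]
      have h3 : (IntermediateField.inclusion hEm)
          ⟨ζ a, hgen a⟩ = ⟨ζ a, hEm (hgen a)⟩ := Subtype.ext rfl
      rw [h3]
      have h4 : f a ⟨ζ a, hgen a⟩ = ξ a := hfgen a
      rw [h4, hval a b (hEm (hgen a))]
  -- glue along the supremum
  let S : ℕ → Subalgebra K Kb := fun n => (E n).toSubalgebra
  have hdirE : Directed (· ≤ ·) E :=
    (monotone_nat_of_le_succ (fun n => hmono n (n + 1) (Nat.le_succ n))).directed_le
  have hdirS : Directed (· ≤ ·) S := by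
    intro i m
    obtain ⟨k, h1, h2⟩ := hdirE i m
    exact ⟨k, h1, h2⟩
  let Lf : IntermediateField K Kb := ⨆ n, E n
  have hT : Lf.toSubalgebra = ⨆ n, S n := toSubalgebra_iSup_of_directed hdirE
  have hf : ∀ i m (h : S i ≤ S m), f i = (f m).comp (Subalgebra.inclusion h) := by
    intro i m h
    have hEm : E i ≤ E m := fun x hx => h hx
    have h6 : (f m).comp (IntermediateField.inclusion hEm) =
        (f m).comp (Subalgebra.inclusion h) := rfl
    exact (hfI' i m hEm).trans h6
  let F : Lf.toSubalgebra →ₐ[K] M := Subalgebra.iSupLift S hdirS f hf Lf.toSubalgebra hT.le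
  -- extend to all of Kb
  let F' : ↥Lf →ₐ[K] M := F
  haveI : NoZeroSMulDivisors (↥Lf) Kb :=
    by have := NoZeroSMulDivisors.iff_algebraMap_injective.mpr (algebraMap (↥Lf) Kb).injective; infer_instance
  letI : Algebra (↥Lf) M := RingHom.toAlgebra (F' : ↥Lf →+* M)
  haveI : NoZeroSMulDivisors (↥Lf) M :=
    by
      have := NoZeroSMulDivisors.iff_algebraMap_injective.mpr
        (show Function.Injective (algebraMap (↥Lf) M) from RingHom.injective _)
      infer_instance
  haveI : Algebra.IsAlgebraic (↥Lf) Kb := Algebra.IsAlgebraic.tower_top (K := K) (↥Lf)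
  let φA : Kb →ₐ[↥Lf] M := IsAlgClosed.lift
  refine ⟨φA.toRingHom, ?_, ?_⟩
  · intro x
    have hx : algebraMap K Kb x ∈ Lf := Lf.algebraMap_mem x
    have h1 : φA.toRingHom (algebraMap K Kb x) = F' ⟨algebraMap K Kb x, hx⟩ :=
      φA.commutes ⟨algebraMap K Kb x, hx⟩
    rw [h1]
    exact F'.commutes x
  · intro n
    have hx : ζ n ∈ Lf := le_iSup E n (hgen n)
    have h1 : φA.toRingHom (ζ n) = F' ⟨ζ n, hx⟩ := φA.commutes ⟨ζ n, hx⟩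
    rw [h1]
    have h2 : F' ⟨ζ n, hx⟩ = f n ⟨ζ n, hgen n⟩ :=
      Subalgebra.iSupLift_of_mem (K := S) (dir := hdirS) (f := f) (hf := hf)
        (T := Lf.toSubalgebra) (hT := hT.le) ⟨ζ n, hx⟩ (hgen n)
    rw [h2, hfgen n]

/-- The cyclotomic polynomials `Φ_{ℓ^n}` are irreducible over the fraction field of an
absolutely unramified discrete valuation ring, by Eisenstein's criterion. -/
lemma cyclo_irred {ℓ : ℕ} (hℓ : ℓ.Prime) {O : Type} [CommRing O] [IsDomain O]
    [IsDiscreteValuationRing O] [CharZero O]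
    (hunram : IsLocalRing.maximalIdeal O = Ideal.span {(ℓ : O)}) (n : ℕ) :
    Irreducible (cyclotomic (ℓ ^ n) (FractionRing O)) := by
  haveI : Fact ℓ.Prime := ⟨hℓ⟩
  cases n with
  | zero => simpa [pow_zero, cyclotomic_one] using irreducible_X_sub_C (1 : FractionRing O)
  | succ m =>
    set K := FractionRing O with hK
    have hl0 : (ℓ : O) ≠ 0 := Nat.cast_ne_zero.mpr hℓ.ne_zero
    have hlnu : ¬ IsUnit (ℓ : O) := by
      intro h
      have hmem : (ℓ : O) ∈ IsLocalRing.maximalIdeal O :=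
        hunram ▸ Ideal.mem_span_singleton_self _
      exact (IsLocalRing.mem_maximalIdeal _).mp hmem h
    have hP : (Ideal.span {(ℓ : O)}).IsPrime :=
      hunram ▸ (IsLocalRing.maximalIdeal.isMaximal O).isPrime
    -- Eisenstein over `O`
    have hZ := cyclotomic_prime_pow_comp_X_add_one_isEisensteinAt ℓ m
    set g : O[X] := (cyclotomic (ℓ ^ (m + 1)) O).comp (X + C 1) with hg
    set gZ : ℤ[X] := (cyclotomic (ℓ ^ (m + 1)) ℤ).comp (X + C 1) with hgZ
    have hmap : g = gZ.map (Int.castRingHom O) := by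
      rw [hgZ, Polynomial.map_comp, map_cyclotomic, Polynomial.map_add, Polynomial.map_X,
        Polynomial.map_C]
      norm_num [hg]
    have hmonicZ : gZ.Monic := (cyclotomic.monic _ ℤ).comp_X_add_C 1
    have hmonic : g.Monic := (cyclotomic.monic _ O).comp_X_add_C 1
    have hdeg : g.natDegree = (ℓ ^ (m + 1)).totient := by
      rw [hg, natDegree_comp, natDegree_X_add_C, natDegree_cyclotomic, mul_one]
    have hdegZ : gZ.natDegree = (ℓ ^ (m + 1)).totient := by
      rw [hgZ, natDegree_comp, natDegree_X_add_C, natDegree_cyclotomic, mul_one]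
    have hEis : g.IsEisensteinAt (Ideal.span {(ℓ : O)}) := by
      refine hmonic.isEisensteinAt_of_mem_of_notMem hP.ne_top ?_ ?_
      · intro i hi
        have hiZ : i < gZ.natDegree := by rw [hdegZ, ← hdeg]; exact hi
        have h1 : gZ.coeff i ∈ Ideal.span ({(ℓ : ℤ)} : Set ℤ) := by
          have h2 := hZ.mem hiZ
          have h3 : (X + 1 : ℤ[X]) = X + C 1 := by norm_num
          rwa [h3, Ideal.submodule_span_eq] at h2
        obtain ⟨c, hc⟩ := Ideal.mem_span_singleton.mp h1
        rw [hmap, coeff_map, hc]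
        refine Ideal.mem_span_singleton.mpr ⟨(c : O), ?_⟩
        simp
      · have h0 : g.coeff 0 = (ℓ : O) := by
          rw [hg, coeff_zero_eq_eval_zero, eval_comp, eval_add, eval_X, eval_C, zero_add,
            eval_one_cyclotomic_prime_pow]
        rw [h0, Ideal.span_singleton_pow, Ideal.mem_span_singleton]
        rintro ⟨c, hc⟩
        apply hlnu
        have h1 : (ℓ : O) * 1 = (ℓ : O) * ((ℓ : O) * c) := by
          conv_lhs => rw [mul_one, hc]
          ring
        exact IsUnit.of_mul_eq_one _ (mul_left_cancel₀ hl0 h1).symm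
    have hIrrO : Irreducible g :=
      hEis.irreducible hP hmonic.isPrimitive
        (by rw [hdeg]; exact Nat.totient_pos.mpr (pow_pos hℓ.pos _))
    haveI : IsIntegrallyClosed O := inferInstance
    have hIrrK : Irreducible (g.map (algebraMap O K)) :=
      (hmonic.irreducible_iff_irreducible_map_fraction_map).mp hIrrO
    have hmapK : g.map (algebraMap O K) = (cyclotomic (ℓ ^ (m + 1)) K).comp (X + C 1) := by
      rw [hg, Polynomial.map_comp, map_cyclotomic, Polynomial.map_add, Polynomial.map_X,
        Polynomial.map_C, map_one]
    have happ : (algEquivAevalXAddC (1 : K)) (cyclotomic (ℓ ^ (m + 1)) K) =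
        (cyclotomic (ℓ ^ (m + 1)) K).comp (X + C 1) := by
      simp [algEquivAevalXAddC_apply, ← comp_eq_aeval]
    refine (MulEquiv.irreducible_iff (algEquivAevalXAddC (1 : K)).toMulEquiv).mp ?_
    show Irreducible ((algEquivAevalXAddC (1 : K)) (cyclotomic (ℓ ^ (m + 1)) K))
    rw [happ, ← hmapK]
    exact hIrrK

/-- Any automorphism of `K` extends to a ring endomorphism of the algebraic closure fixing
all roots of unity of `ℓ`-power order. -/
lemma keyA {K Kb : Type} [Field K] [CharZero K] [Field Kb] [Algebra K Kb]
    [IsAlgClosed Kb] [Algebra.IsAlgebraic K Kb] {ℓ : ℕ} (hℓ : ℓ.Prime)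
    (hirr : ∀ n : ℕ, Irreducible (Polynomial.cyclotomic (ℓ ^ n) K)) (j : K →+* Kb) :
    ∃ φ : Kb →+* Kb, (∀ x : K, φ (algebraMap K Kb x) = j x) ∧
      ∀ z : Kb, (∃ n : ℕ, z ^ ℓ ^ n = 1) → φ z = z := by
  haveI : CharZero Kb := charZero_of_injective_algebraMap (algebraMap K Kb).injective
  obtain ⟨ζ, hζ, hζc⟩ := exists_zeta_tower Kb hℓ
  obtain ⟨φ, h1, h2⟩ := keyB hℓ hirr j ζ hζ hζc ζ hζ hζc
  refine ⟨φ, h1, ?_⟩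
  rintro z ⟨n, hz⟩
  haveI : NeZero (ℓ ^ n) := ⟨pow_ne_zero _ hℓ.ne_zero⟩
  obtain ⟨i, -, rfl⟩ := (hζ n).eq_pow_of_pow_eq_one hz
  rw [map_pow, h2 n]

/-- Let `O` be an absolutely unramified complete discrete valuation ring with
residue field `F̄_ℓ`, `K` its fraction field, `σ̂K` the automorphism of `K` lifting the Frobenius
of the residue field. Then there is a field automorphism `τ` of the algebraic closure `K̄`
extending `σ̂K` which fixes every root of unity of `ℓ`-power order. -/
theorem stmt_12 {ℓ : ℕ} (hℓ : ℓ.Prime) {O : Type} [CommRing O] [IsDomain O]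
    [IsDiscreteValuationRing O] [CharZero O]
    [IsAdicComplete (IsLocalRing.maximalIdeal O) O]
    [IsAlgClosed (IsLocalRing.ResidueField O)]
    (hchar : CharP (IsLocalRing.ResidueField O) ℓ)
    (hunram : IsLocalRing.maximalIdeal O = Ideal.span {(ℓ : O)})
    (σ : O ≃+* O)
    (hσ : ∀ x : O, IsLocalRing.residue O (σ x) = IsLocalRing.residue O x ^ ℓ)
    (σK : FractionRing O ≃+* FractionRing O)
    (hσK : ∀ x : O, σK (algebraMap O (FractionRing O) x) =
      algebraMap O (FractionRing O) (σ x)) :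
    ∃ τ : AlgebraicClosure (FractionRing O) ≃+* AlgebraicClosure (FractionRing O),
      (∀ x : FractionRing O,
        τ (algebraMap (FractionRing O) (AlgebraicClosure (FractionRing O)) x) =
          algebraMap (FractionRing O) (AlgebraicClosure (FractionRing O)) (σK x)) ∧
      ∀ ζ : AlgebraicClosure (FractionRing O), (∃ n : ℕ, ζ ^ ℓ ^ n = 1) → τ ζ = ζ := by
  letI K := FractionRing O
  letI Kb := AlgebraicClosure K
  haveI : CharZero K :=
    charZero_of_injective_algebraMap (IsFractionRing.injective O K)
  have hirr : ∀ n : ℕ, Irreducible (Polynomial.cyclotomic (ℓ ^ n) K) :=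
    cyclo_irred hℓ hunram
  obtain ⟨φ, hφ1, hφ2⟩ := keyA hℓ hirr ((algebraMap K Kb).comp σK.toRingHom)
  obtain ⟨ψ, hψ1, hψ2⟩ := keyA hℓ hirr ((algebraMap K Kb).comp σK.symm.toRingHom)
  have hφ1' : ∀ x : K, φ (algebraMap K Kb x) = algebraMap K Kb (σK x) := hφ1
  have hψ1' : ∀ x : K, ψ (algebraMap K Kb x) = algebraMap K Kb (σK.symm x) := hψ1
  let c1 : Kb →ₐ[K] Kb :=
    { toRingHom := ψ.comp φ
      commutes' := fun x => by
        show ψ (φ (algebraMap K Kb x)) = algebraMap K Kb x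
        rw [hφ1' x, hψ1' (σK x), RingEquiv.symm_apply_apply] }
  let c2 : Kb →ₐ[K] Kb :=
    { toRingHom := φ.comp ψ
      commutes' := fun x => by
        show φ (ψ (algebraMap K Kb x)) = algebraMap K Kb x
        rw [hψ1' x, hφ1' (σK.symm x), RingEquiv.apply_symm_apply] }
  haveI : NoZeroSMulDivisors K Kb :=
    by have := NoZeroSMulDivisors.iff_algebraMap_injective.mpr (algebraMap K Kb).injective; infer_instance
  have hb2 : Function.Bijective c2 := Algebra.IsAlgebraic.algHom_bijective c2
  have hsurj : Function.Surjective φ := by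
    intro y
    obtain ⟨x, hx⟩ := hb2.2 y
    exact ⟨ψ x, hx⟩
  refine ⟨RingEquiv.ofBijective φ ⟨φ.injective, hsurj⟩, ?_, ?_⟩
  · intro x
    exact hφ1' x
  · intro z hz
    exact hφ2 z hz
end
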